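/- arXiv:0808.1309 — 5 statements merged into one kernel-verified Lean document; each statement's English description precedes it below -/
import Mathlib

section
/- For all positive integers n and k, there exists a universal cycle of all k-letter words on an n-letter alphabet; that is, there is a cyclic sequence of length n^k over the alphabet {1,...,n} such that every k-letter word appears exactly once as a consecutive (cyclically wrapped) substring. -/
open List

section Euler
variable {E V : Type*} [Fintype E] [DecidableEq E] [DecidableEq V] (s t : E → V)

/-- vertex sequence identity for a chain of edges -/
lemma chain_map_eq : ∀ (T : List E) (h : T ≠ []), T.Chain' (fun a b => t a = s b) →
    T.map s ++ [t (T.getLast h)] = s (T.head h) :: T.map t := by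
  intro T
  induction T with
  | nil => simp
  | cons a l ih =>
    intro _ hc
    cases l with
    | nil => simp
    | cons b l' =>
      have hc' := (List.isChain_cons_cons.mp hc)
      have := ih (by simp) hc'.2
      simp only [List.map_cons, List.getLast_cons (by simp : (b :: l') ≠ [])] at this ⊢
      rw [List.cons_append, this]
      simp [hc'.1]

lemma count_identity (T : List E) (h : T ≠ []) (hc : T.Chain' (fun a b => t a = s b)) (w : V) :
    T.countP (fun e => s e = w) + (if t (T.getLast h) = w then 1 else 0)
      = (if s (T.head h) = w then 1 else 0) + T.countP (fun e => t e = w) := by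
  have := congrArg (List.countP (fun v => decide (v = w))) (chain_map_eq s t T h hc)
  simp only [List.countP_append, List.countP_cons, List.countP_map, List.countP_nil,
    Function.comp_def] at this
  by_cases h1 : t (T.getLast h) = w <;> by_cases h2 : s (T.head h) = w <;>
    simp [h1, h2] at this ⊢ <;> omega

lemma closed_balance (T : List E) (hc : T.Chain' (fun a b => t a = s b))
    (hcl : ∀ x ∈ T.getLast?, ∀ y ∈ T.head?, t x = s y) (w : V) :
    T.countP (fun e => s e = w) = T.countP (fun e => t e = w) := by
  rcases eq_or_ne T [] with rfl | h
  · simp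
  · have hcl' : t (T.getLast h) = s (T.head h) :=
      hcl _ (List.getLast?_eq_getLast h ▸ rfl) _ ((List.head?_eq_head h) ▸ rfl)
    have := count_identity s t T h hc w
    rw [hcl'] at this
    by_cases h2 : s (T.head h) = w <;> simp [h2] at this ⊢ <;> omega

variable (A : Finset E)

/-- a trail: nodup list of allowed edges, consecutive -/
def IsTrail (T : List E) : Prop :=
  T.Nodup ∧ (∀ e ∈ T, e ∈ A) ∧ T.Chain' (fun a b => t a = s b)

lemma countP_toFinset {T : List E} (hnd : T.Nodup) (p : E → Prop) [DecidablePred p] :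
    (T.toFinset.filter p).card = T.countP (fun e => decide (p e)) := by
  have : Finset.filter p T.toFinset
      = (List.filter (fun e => decide (p e)) T).toFinset := by
    rw [List.toFinset_filter]; simp
  rw [this, List.toFinset_card_of_nodup (hnd.filter _), List.countP_eq_length_filter]

lemma countP_le {T : List E} (hnd : T.Nodup) (hsub : ∀ e ∈ T, e ∈ A)
    (p : E → Prop) [DecidablePred p] :
    T.countP (fun e => decide (p e)) ≤ (A.filter p).card := by
  rw [← countP_toFinset hnd]
  exact Finset.card_le_card (fun e he => by
    simp only [Finset.mem_filter, List.mem_toFinset] at he ⊢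
    exact ⟨hsub e he.1, he.2⟩)

lemma exists_unused {T : List E} (hnd : T.Nodup) (p : E → Prop) [DecidablePred p]
    (hlt : T.countP (fun e => decide (p e)) < (A.filter p).card) :
    ∃ e ∈ A, p e ∧ e ∉ T := by
  by_contra hcon
  push_neg at hcon
  have : (A.filter p) ⊆ T.toFinset.filter p := by
    intro e he
    simp only [Finset.mem_filter, List.mem_toFinset] at he ⊢
    exact ⟨hcon e he.1 he.2, he.2⟩
  have := Finset.card_le_card this
  rw [countP_toFinset hnd] at this
  omega

/-- a maximal nonempty trail in a balanced edge set is closed -/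
lemma maximal_closed
    (hbal : ∀ v, (A.filter (fun e => s e = v)).card = (A.filter (fun e => t e = v)).card)
    {T : List E} (hT : IsTrail s t A T) (h : T ≠ [])
    (hmax : ¬ ∃ e ∈ A, e ∉ T ∧ s e = t (T.getLast h)) :
    t (T.getLast h) = s (T.head h) := by
  by_contra hne
  set w := t (T.getLast h) with hw
  have hid := count_identity s t T h hT.2.2 w
  rw [if_pos rfl, if_neg (fun hh => hne hh.symm)] at hid
  have h1 : T.countP (fun e => t e = w) ≤ (A.filter (fun e => t e = w)).card :=
    countP_le A hT.1 hT.2.1 (fun e => t e = w)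
  have h2 : T.countP (fun e => s e = w) < (A.filter (fun e => s e = w)).card := by
    rw [hbal w]; omega
  obtain ⟨e, heA, hep, heT⟩ := exists_unused A hT.1 (fun e => s e = w) h2
  exact hmax ⟨e, heA, heT, hep⟩

/-- extend a trail to a maximal one -/
lemma exists_maximal_ext :
    ∀ (N : ℕ) (T : List E), A.card - T.length ≤ N → IsTrail s t A T → T ≠ [] →
    ∃ T' : List E, T <+: T' ∧ IsTrail s t A T' ∧ ∃ h' : T' ≠ [],
      ¬ ∃ e ∈ A, e ∉ T' ∧ s e = t (T'.getLast h') := by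
  intro N
  induction N with
  | zero =>
    intro T hN hT h
    refine ⟨T, List.prefix_refl T, hT, h, ?_⟩
    rintro ⟨e, heA, heT, hes⟩
    have hlen : T.length < A.card := by
      have : insert e T.toFinset ⊆ A := by
        intro x hx
        rcases Finset.mem_insert.mp hx with rfl | hx
        · exact heA
        · exact hT.2.1 x (List.mem_toFinset.mp hx)
      have hcard := Finset.card_le_card this
      rw [Finset.card_insert_of_notMem (fun hc => heT (List.mem_toFinset.mp hc)),
        List.toFinset_card_of_nodup hT.1] at hcard
      omega
    omega
  | succ N ih =>
    intro T hN hT h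
    by_cases hmax : ∃ e ∈ A, e ∉ T ∧ s e = t (T.getLast h)
    · obtain ⟨e, heA, heT, hes⟩ := hmax
      have hT' : IsTrail s t A (T ++ [e]) := by
        refine ⟨?_, ?_, ?_⟩
        · simpa [List.nodup_append] using ⟨hT.1, fun a ha hae => heT (hae ▸ ha)⟩
        · intro x hx
          rcases List.mem_append.mp hx with hx | hx
          · exact hT.2.1 x hx
          · simp at hx; subst hx; exact heA
        · rw [List.Chain', List.isChain_append]
          refine ⟨hT.2.2, List.isChain_singleton e, ?_⟩
          intro x hx y hy
          rw [List.getLast?_eq_getLast h] at hx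
          simp at hx hy
          subst hx; subst hy
          exact hes.symm
      have hlen : T.length < A.card := by
        have : insert e T.toFinset ⊆ A := by
          intro x hx
          rcases Finset.mem_insert.mp hx with rfl | hx
          · exact heA
          · exact hT.2.1 x (List.mem_toFinset.mp hx)
        have hcard := Finset.card_le_card this
        rw [Finset.card_insert_of_notMem (fun hc => heT (List.mem_toFinset.mp hc)),
          List.toFinset_card_of_nodup hT.1] at hcard
        omega
      obtain ⟨T', hpre, h1, h2⟩ := ih (T ++ [e]) (by simp; omega) hT' (by simp)
      exact ⟨T', (List.prefix_append T [e]).trans hpre, h1, h2⟩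
    · exact ⟨T, List.prefix_refl T, hT, h, hmax⟩

lemma mem_getLast?' {α : Type*} (T : List α) (h : T ≠ []) : T.getLast h ∈ T.getLast? := by
  rw [Option.mem_def]; exact List.getLast?_eq_getLast h

lemma mem_head?' {α : Type*} (T : List α) (h : T ≠ []) : T.head h ∈ T.head? := by
  rw [Option.mem_def]; exact List.head?_eq_head h

/-- closed chain condition, empty-friendly -/
def IsClosedChain (T : List E) : Prop := ∀ x ∈ T.getLast?, ∀ y ∈ T.head?, t x = s y

lemma rotation_chain {X Y : List E} {e : E}
    (hc : (X ++ e :: Y).Chain' (fun a b => t a = s b))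
    (hcl : IsClosedChain s t (X ++ e :: Y)) :
    ((e :: Y) ++ X).Chain' (fun a b => t a = s b) ∧ IsClosedChain s t ((e :: Y) ++ X) := by
  rcases eq_or_ne X [] with rfl | hX
  · simpa using ⟨hc, hcl⟩
  · rw [List.Chain', List.isChain_append] at hc
    obtain ⟨hcX, hcY, hj⟩ := hc
    constructor
    · rw [List.Chain', List.isChain_append]
      refine ⟨hcY, hcX, ?_⟩
      intro x hx y hy
      apply hcl
      · rw [List.getLast?_append_of_ne_nil X (by simp : e :: Y ≠ [])]
        exact hx
      · rw [List.head?_append_of_ne_nil _ hX]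
        exact hy
    · intro x hx y hy
      rw [List.getLast?_append_of_ne_nil (e :: Y) hX] at hx
      rw [List.head?_append_of_ne_nil _ (by simp : e :: Y ≠ [])] at hy
      simp only [List.head?_cons, Option.mem_some_iff] at hy
      subst hy
      exact hj x hx e rfl

/-- in a nonempty closed chain, the target of every edge is a source of some edge -/
lemma target_mem_sources :
    ∀ (T : List E), T.Chain' (fun a b => t a = s b) → IsClosedChain s t T →
      ∀ f ∈ T, t f ∈ T.map s := by
  have key : ∀ (T : List E) (h : T ≠ []), T.Chain' (fun a b => t a = s b) →
      ∀ f ∈ T, t f ∈ T.map s ∨ f = T.getLast h := by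
    intro T
    induction T with
    | nil => simp
    | cons a l ih =>
      intro _ hc f hf
      cases l with
      | nil => simp at hf; subst hf; right; simp
      | cons b l' =>
        have hc' := List.isChain_cons_cons.mp hc
        rcases List.mem_cons.mp hf with rfl | hf
        · left; simp [hc'.1]
        · rcases ih (by simp) hc'.2 f hf with h | h
          · left; simp only [List.map_cons] at h ⊢
            exact List.mem_cons_of_mem _ h
          · right; rwa [List.getLast_cons (by simp : (b :: l') ≠ [])]
  intro T hc hcl f hf
  have h : T ≠ [] := fun hh => by subst hh; simp at hf
  rcases key T h hc f hf with hmem | rfl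
  · exact hmem
  · have := hcl _ (mem_getLast?' T h) _ (mem_head?' T h)
    rw [this]
    exact List.mem_map_of_mem (f := s) (List.head_mem h)

/-- connectivity: find an unused edge rooted at a vertex of the closed trail -/
lemma exists_touching_edge
    (hconn : ∀ u w : V, Relation.ReflTransGen (fun a b => ∃ e, s e = a ∧ t e = b) u w)
    {C : List E} (hC : C ≠ []) (hc : C.Chain' (fun a b => t a = s b)) (hcl : IsClosedChain s t C)
    {e0 : E} (he0 : e0 ∉ C) :
    ∃ e, e ∉ C ∧ s e ∈ C.map s := by
  have hu : s (C.head hC) ∈ C.map s := List.mem_map_of_mem (f := s) (List.head_mem hC)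
  have key : ∀ u, Relation.ReflTransGen (fun a b => ∃ e, s e = a ∧ t e = b) u (s e0) →
      u ∈ C.map s → ∃ e, e ∉ C ∧ s e ∈ C.map s := by
    intro u h
    induction h using Relation.ReflTransGen.head_induction_on with
    | refl => exact fun hmem => ⟨e0, he0, hmem⟩
    | head step _ ih =>
      intro hmem
      obtain ⟨f, hfs, hft⟩ := step
      by_cases hf : f ∈ C
      · exact ih (hft ▸ target_mem_sources s t C hc hcl f hf)
      · exact ⟨f, hf, hfs ▸ hmem⟩
  exact key _ (hconn _ _) hu

lemma complement_balance
    (hbal : ∀ v, (Finset.univ.filter (fun e => s e = v)).card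
      = (Finset.univ.filter (fun e => t e = v)).card)
    {C : List E} (hnd : C.Nodup) (hc : C.Chain' (fun a b => t a = s b))
    (hcl : IsClosedChain s t C) (v : V) :
    ((Finset.univ \ C.toFinset).filter (fun e => s e = v)).card
      = ((Finset.univ \ C.toFinset).filter (fun e => t e = v)).card := by
  have key : ∀ (p : E → Prop) (_ : DecidablePred p),
      ((Finset.univ \ C.toFinset).filter p).card
        = (Finset.univ.filter p).card - C.countP (fun e => decide (p e)) := by
    intro p hp
    have h1 : (Finset.univ \ C.toFinset).filter p
        = Finset.univ.filter p \ C.toFinset.filter p := by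
      ext e
      simp only [Finset.mem_filter, Finset.mem_sdiff, Finset.mem_univ, true_and]
      tauto
    rw [h1, Finset.card_sdiff_of_subset (Finset.filter_subset_filter p (Finset.subset_univ _)),
      countP_toFinset hnd]
  rw [key _ inferInstance, key _ inferInstance, hbal v,
    closed_balance s t C hc hcl v]

/-- main step: a non-spanning closed trail can be enlarged -/
lemma euler_step
    (hbal : ∀ v, (Finset.univ.filter (fun e => s e = v)).card
      = (Finset.univ.filter (fun e => t e = v)).card)
    (hconn : ∀ u w : V, Relation.ReflTransGen (fun a b => ∃ e, s e = a ∧ t e = b) u w)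
    {C : List E} (hT : IsTrail s t Finset.univ C) (hcl : IsClosedChain s t C)
    (hlt : C.length < Fintype.card E) :
    ∃ C' : List E, IsTrail s t Finset.univ C' ∧ IsClosedChain s t C' ∧
      C.length < C'.length := by
  -- there is an unused edge
  have hex : ∃ e0 : E, e0 ∉ C := by
    by_contra hcon
    push_neg at hcon
    have : (Finset.univ : Finset E).card ≤ C.toFinset.card :=
      Finset.card_le_card (fun e _ => List.mem_toFinset.mpr (hcon e))
    rw [List.toFinset_card_of_nodup hT.1, Finset.card_univ] at this
    omega
  obtain ⟨e0, he0⟩ := hex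
  rcases eq_or_ne C [] with rfl | hCne
  · -- empty trail: take a maximal trail from e0 in the whole graph
    obtain ⟨D, hpre, hD, hDne, hDmax⟩ := exists_maximal_ext s t Finset.univ
      (Fintype.card E) [e0] (by simp) ⟨by simp, by simp, by simp [List.Chain']⟩ (by simp)
    have hclosedD : t (D.getLast hDne) = s (D.head hDne) := by
      apply maximal_closed s t Finset.univ hbal hD hDne
      rintro ⟨e, _, heD, hes⟩
      exact hDmax ⟨e, Finset.mem_univ e, heD, hes⟩
    refine ⟨D, hD, ?_, ?_⟩
    · intro x hx y hy
      rw [List.getLast?_eq_getLast hDne, Option.mem_some_iff] at hx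
      rw [List.head?_eq_head hDne, Option.mem_some_iff] at hy
      subst hx; subst hy; exact hclosedD
    · simp only [List.length_nil]
      exact List.length_pos_iff.mpr hDne
  · -- nonempty: find unused edge touching C
    obtain ⟨e1, he1C, he1v⟩ :=
      exists_touching_edge s t hconn hCne hT.2.2 hcl he0
    set A' : Finset E := Finset.univ \ C.toFinset with hA'
    have hbalA' := complement_balance s t hbal hT.1 hT.2.2 hcl
    have he1A' : e1 ∈ A' := by
      simp [hA', List.mem_toFinset, he1C]
    obtain ⟨D, hpre, hD, hDne, hDmax⟩ := exists_maximal_ext s t A'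
      (Fintype.card E) [e1] (by have := Finset.card_le_univ A'; omega)
      ⟨by simp, by simpa using he1A', by simp [List.Chain']⟩ (by simp)
    have hheadD : D.head hDne = e1 := by
      obtain ⟨u, rfl⟩ := hpre
      simp
    have hclosedD : t (D.getLast hDne) = s e1 := by
      rw [← hheadD]
      apply maximal_closed s t A' hbalA' hD hDne
      rintro ⟨e, heA, heD, hes⟩
      exact hDmax ⟨e, heA, heD, hes⟩
    -- rotate C to start at s e1
    obtain ⟨e'', he''C, he''v⟩ := List.mem_map.mp he1v
    obtain ⟨X, Y, rfl⟩ := List.append_of_mem he''C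
    obtain ⟨hrotc, hrotcl⟩ := rotation_chain s t hT.2.2 hcl
    have hDsub : ∀ e ∈ D, e ∉ X ++ e'' :: Y := by
      intro e heD hmem
      have := hD.2.1 e heD
      simp [hA', List.mem_toFinset] at this
      simp at hmem
      tauto
    refine ⟨D ++ (e'' :: Y ++ X), ⟨?_, fun e _ => Finset.mem_univ e, ?_⟩, ?_, ?_⟩
    · rw [List.nodup_append]
      refine ⟨hD.1, ?_, ?_⟩
      · exact ((List.perm_append_comm (l₁ := X) (l₂ := e'' :: Y)).nodup_iff).mp hT.1
      · intro e heD _ hmem rfl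
        exact hDsub e heD (by
          rcases List.mem_append.mp hmem with h | h
          · exact List.mem_append.mpr (Or.inr h)
          · exact List.mem_append.mpr (Or.inl h))
    · rw [List.Chain', List.isChain_append]
      refine ⟨hD.2.2, by simpa [List.Chain'] using hrotc, ?_⟩
      intro x hx y hy
      rw [List.getLast?_eq_getLast hDne, Option.mem_some_iff] at hx
      simp only [List.cons_append, List.head?_cons, Option.mem_some_iff] at hy
      subst hx; subst hy
      rw [hclosedD, he''v]
    · intro x hx y hy
      rw [List.getLast?_append_of_ne_nil D (by simp : e'' :: Y ++ X ≠ [])] at hx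
      rw [List.head?_append_of_ne_nil _ (List.ne_nil_of_length_pos
        (List.length_pos_iff.mpr hDne))] at hy
      have := hrotcl x (by simpa using hx)
      have hy' : y = D.head hDne := by
        rw [List.head?_eq_head hDne, Option.mem_some_iff] at hy
        exact hy.symm
      subst hy'
      rw [hheadD]
      have hxe : t x = s e'' := by
        have := hrotcl x (by simpa using hx) e'' (by simp)
        simpa using this
      rw [hxe, he''v]
    · have : 0 < D.length := List.length_pos_iff.mpr hDne
      simp only [List.length_append, List.length_cons]
      simp only [List.length_append, List.length_cons] at *
      omega

theorem euler_circuit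
    (hbal : ∀ v, (Finset.univ.filter (fun e => s e = v)).card
      = (Finset.univ.filter (fun e => t e = v)).card)
    (hconn : ∀ u w : V, Relation.ReflTransGen (fun a b => ∃ e, s e = a ∧ t e = b) u w) :
    ∃ C : List E, C.Nodup ∧ C.length = Fintype.card E ∧
      C.Chain' (fun a b => t a = s b) ∧ IsClosedChain s t C := by
  have key : ∀ (N : ℕ) (C : List E), IsTrail s t Finset.univ C → IsClosedChain s t C →
      Fintype.card E - C.length ≤ N →
      ∃ C' : List E, IsTrail s t Finset.univ C' ∧ IsClosedChain s t C' ∧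
        C'.length = Fintype.card E := by
    intro N
    induction N with
    | zero =>
      intro C hT hcl hN
      have : C.length ≤ Fintype.card E := by
        rw [← List.toFinset_card_of_nodup hT.1, ← Finset.card_univ]
        exact Finset.card_le_univ _
      exact ⟨C, hT, hcl, by omega⟩
    | succ N ih =>
      intro C hT hcl hN
      have hle : C.length ≤ Fintype.card E := by
        rw [← List.toFinset_card_of_nodup hT.1, ← Finset.card_univ]
        exact Finset.card_le_univ _
      rcases eq_or_lt_of_le hle with heq | hlt
      · exact ⟨C, hT, hcl, heq⟩
      · obtain ⟨C', hT', hcl', hlen⟩ := euler_step s t hbal hconn hT hcl hlt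
        exact ih C' hT' hcl' (by omega)
  obtain ⟨C, hT, hcl, hlen⟩ := key (Fintype.card E) [] ⟨by simp, by simp, by simp [List.Chain']⟩
    (by intro x hx; simp at hx) (by simp)
  exact ⟨C, hT.1, hlen, hT.2.2, hcl⟩

end Euler

section DeBruijn

variable {n m : ℕ}

/-- source of a word: first m letters -/
def dbS (w : Fin (m + 1) → Fin n) : Fin m → Fin n := fun j => w j.castSucc
/-- target of a word: last m letters -/
def dbT (w : Fin (m + 1) → Fin n) : Fin m → Fin n := fun j => w j.succ

lemma db_balance (hn : 0 < n) (v : Fin m → Fin n) :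
    (Finset.univ.filter (fun e => dbS e = v)).card
      = (Finset.univ.filter (fun e => dbT e = v)).card := by
  rw [← Fintype.card_subtype, ← Fintype.card_subtype]
  have e1 : {w : Fin (m + 1) → Fin n // dbS w = v} ≃ Fin n :=
    { toFun := fun w => w.1 (Fin.last m)
      invFun := fun a => ⟨Fin.snoc v a, by
        funext j
        simp [dbS, Fin.snoc_castSucc]⟩
      left_inv := fun w => by
        apply Subtype.ext
        funext j
        refine Fin.lastCases ?_ ?_ j
        · simp [Fin.snoc_last]
        · intro i
          simp only [Fin.snoc_castSucc]
          exact (congrFun w.2 i).symm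
      right_inv := fun a => by simp [Fin.snoc_last] }
  have e2 : {w : Fin (m + 1) → Fin n // dbT w = v} ≃ Fin n :=
    { toFun := fun w => w.1 0
      invFun := fun a => ⟨Fin.cons a v, by
        funext j
        simp [dbT, Fin.cons_succ]⟩
      left_inv := fun w => by
        apply Subtype.ext
        funext j
        refine Fin.cases ?_ ?_ j
        · simp [Fin.cons_zero]
        · intro i
          simp only [Fin.cons_succ]
          exact (congrFun w.2 i).symm
      right_inv := fun a => by simp [Fin.cons_zero] }
  rw [Fintype.card_congr e1, Fintype.card_congr e2]

lemma db_conn (hn : 0 < n) (u w : Fin m → Fin n) :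
    Relation.ReflTransGen (fun a b => ∃ e : Fin (m + 1) → Fin n, dbS e = a ∧ dbT e = b) u w := by
  classical
  set big : ℕ → Fin n := fun x =>
    if h : x < m then u ⟨x, h⟩ else if h2 : x - m < m then w ⟨x - m, h2⟩ else ⟨0, hn⟩ with hbig
  set seg : ℕ → (Fin m → Fin n) := fun d j => big (j + d) with hseg
  have hstep : ∀ d, ∃ e : Fin (m + 1) → Fin n, dbS e = seg d ∧ dbT e = seg (d + 1) := by
    intro d
    refine ⟨fun i => big (i + d), ?_, ?_⟩
    · funext j
      simp only [dbS, hseg, Fin.coe_castSucc]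
    · funext j
      simp only [dbT, hseg, Fin.val_succ]
      congr 1
      omega
  have hreach : ∀ d, Relation.ReflTransGen
      (fun a b => ∃ e : Fin (m + 1) → Fin n, dbS e = a ∧ dbT e = b) (seg 0) (seg d) := by
    intro d
    induction d with
    | zero => exact Relation.ReflTransGen.refl
    | succ d ih =>
      obtain ⟨e, h1, h2⟩ := hstep d
      exact ih.tail ⟨e, h1, h2⟩
  have h0 : seg 0 = u := by
    funext j
    simp only [hseg, hbig, Nat.add_zero]
    rw [dif_pos j.isLt]
  have hm : seg m = w := by
    funext j
    simp only [hseg, hbig]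
    rw [dif_neg (by omega), dif_pos (by omega : j + m - m < m)]
    have : (⟨(j : ℕ) + m - m, by omega⟩ : Fin m) = j := by
      apply Fin.ext
      simp
    rw [this]
  rw [← h0, ← hm]
  exact hreach m

end DeBruijn

/-- de Bruijn's theorem: for all positive `n`, `k` there is a cyclic sequence of
length `n ^ k` over an `n`-letter alphabet in which every `k`-letter word occurs
exactly once as a window of `k` cyclically consecutive letters. -/
theorem stmt_1 (n k : ℕ) (hn : 0 < n) (hk : 0 < k) :
    ∃ c : ZMod (n ^ k) → Fin n,
      ∀ w : Fin k → Fin n, ∃! i : ZMod (n ^ k), ∀ j : Fin k, c (i + (j : ℕ)) = w j := by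
  classical
  obtain ⟨m, rfl⟩ : ∃ m, k = m + 1 := ⟨k - 1, (Nat.succ_pred_eq_of_pos hk).symm⟩
  set N := n ^ (m + 1) with hN
  haveI : NeZero N := ⟨(pow_pos hn (m + 1)).ne'⟩
  have hcard : Fintype.card (Fin (m + 1) → Fin n) = N := by
    rw [Fintype.card_fun, Fintype.card_fin, Fintype.card_fin]
  obtain ⟨C, hnd, hlen, hchain, hcl⟩ :=
    euler_circuit (dbS (n := n) (m := m)) dbT (db_balance hn) (db_conn hn)
  rw [hcard] at hlen
  have hCne : C ≠ [] := by
    intro h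
    rw [h] at hlen
    exact (NeZero.ne N) (by simpa using hlen.symm)
  set f : ZMod N → (Fin (m + 1) → Fin n) :=
    fun i => C.get ⟨i.val, by rw [hlen]; exact ZMod.val_lt i⟩ with hf
  -- injectivity
  have hfinj : Function.Injective f := by
    intro i₁ i₂ h
    rw [hf] at h
    have := (hnd.get_inj_iff).mp h
    have hvals : i₁.val = i₂.val := congrArg Fin.val this
    exact ZMod.val_injective N hvals
  -- surjectivity
  have hfsurj : Function.Surjective f := by
    intro w
    have hmem : w ∈ C := by
      have : C.toFinset = Finset.univ :=
        Finset.eq_univ_of_card _ (by rw [List.toFinset_card_of_nodup hnd, hlen, hcard])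
      rw [← List.mem_toFinset, this]
      exact Finset.mem_univ w
    obtain ⟨idx, hidx⟩ := List.get_of_mem hmem
    refine ⟨((idx : ℕ) : ZMod N), ?_⟩
    rw [hf]
    have hv : (((idx : ℕ) : ZMod N)).val = (idx : ℕ) :=
      ZMod.val_cast_of_lt (by rw [← hlen]; exact idx.isLt)
    rw [← hidx]
    exact congrArg C.get (Fin.ext hv)
  -- the shift property
  have hstep : ∀ i : ZMod N, dbT (f i) = dbS (f (i + 1)) := by
    intro i
    have hv1 : (i + 1).val = (i.val + 1) % N := by
      rw [ZMod.val_add, ZMod.val_one_eq_one_mod]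
      have h2 : (i.val % N + 1 % N) % N = (i.val + 1) % N := (Nat.add_mod _ _ _).symm
      rw [Nat.mod_eq_of_lt (ZMod.val_lt i)] at h2
      exact h2
    by_cases hlt : i.val + 1 < N
    · have hv : (i + 1).val = i.val + 1 := by rw [hv1, Nat.mod_eq_of_lt hlt]
      have := List.isChain_iff_getElem.mp hchain i.val (by rw [hlen]; omega)
      rw [hf]
      simp only [hv]
      exact this
    · have hNe : i.val + 1 = N := by have := ZMod.val_lt i; omega
      have hv : (i + 1).val = 0 := by rw [hv1, hNe, Nat.mod_self]
      have hclosed := hcl _ (mem_getLast?' C hCne) _ (mem_head?' C hCne)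
      rw [hf]
      simp only [hv]
      rw [show C.getLast hCne = C.get ⟨C.length - 1, Nat.sub_lt (List.length_pos_iff.mpr hCne) Nat.one_pos⟩ from List.getLast_eq_getElem hCne] at hclosed
      have h0 : C.head hCne = C.get ⟨0, List.length_pos_iff.mpr hCne⟩ :=
        (List.get_mk_zero (List.length_pos_iff.mpr hCne)).symm
      rw [h0] at hclosed
      convert hclosed using 3
      exact Fin.ext (by simp; omega)
  -- the window property
  have hwin : ∀ (v : ℕ) (h : v < m + 1) (x : ZMod N),
      f (x + (v : ℕ)) ⟨0, Nat.succ_pos m⟩ = f x ⟨v, h⟩ := by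
    intro v
    induction v with
    | zero => intro h x; simp
    | succ v ih =>
      intro h x
      have h' : v < m + 1 := by omega
      have hcast : ((v + 1 : ℕ) : ZMod N) = (v : ℕ) + 1 := by push_cast; ring
      have hx : x + ((v + 1 : ℕ) : ZMod N) = (x + 1) + (v : ℕ) := by rw [hcast]; ring
      rw [hx, ih h' (x + 1)]
      set jv : Fin m := ⟨v, by omega⟩ with hjv
      have hrel := congrFun (hstep x) jv
      simp only [dbS, dbT] at hrel
      have h1 : jv.castSucc = (⟨v, h'⟩ : Fin (m + 1)) := Fin.ext rfl
      have h2 : jv.succ = (⟨v + 1, h⟩ : Fin (m + 1)) := Fin.ext rfl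
      rw [h1, h2] at hrel
      exact hrel.symm
  refine ⟨fun i => f i ⟨0, Nat.succ_pos m⟩, ?_⟩
  intro w
  have hcond : ∀ i : ZMod N, (∀ j : Fin (m + 1), f (i + (j : ℕ)) ⟨0, Nat.succ_pos m⟩ = w j)
      ↔ f i = w := by
    intro i
    constructor
    · intro h
      funext j
      rw [← h j, hwin j.val j.isLt i]
    · intro h j
      rw [hwin j.val j.isLt i, h]
  obtain ⟨i, hi⟩ := hfsurj w
  refine ⟨i, (hcond i).mpr hi, ?_⟩
  intro i' hi'
  exact hfinj (((hcond i').mp hi').trans hi.symm)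
end

section
/- Let m ≡ 1 (mod n) with m > n ≥ 2, and set M = m - 1, r = M/n. In the digraph whose vertices are M-letter words on [n] extendable to equitable m-letter words, a vertex in which every letter appears exactly r times has in-degree and out-degree equal to n, and every other vertex (having one letter appearing r-1 times, one appearing r+1 times, and the rest r times) has in-degree and out-degree equal to 1. -/
/-- The number of occurrences of the letter `i` in the word `w`. -/
def letterCount {m n : ℕ} (w : Fin m → Fin n) (i : Fin n) : ℕ :=
  (Finset.univ.filter fun p => w p = i).card

/-- A word is equitable if any two letter frequencies differ by at most 1. -/
def Equitable {m n : ℕ} (w : Fin m → Fin n) : Prop :=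
  ∀ i j : Fin n, letterCount w i ≤ letterCount w j + 1

lemma lc_eq_sum {m n : ℕ} (w : Fin m → Fin n) (i : Fin n) :
    letterCount w i = ∑ p, if w p = i then 1 else 0 := by
  unfold letterCount
  rw [Finset.card_filter]

lemma sum_lc {m n : ℕ} (w : Fin m → Fin n) : ∑ i, letterCount w i = m := by
  simp only [lc_eq_sum]
  rw [Finset.sum_comm]
  simp

lemma lc_snoc {M n : ℕ} (v : Fin M → Fin n) (c i : Fin n) :
    letterCount (Fin.snoc v c) i = letterCount v i + if c = i then 1 else 0 := by
  rw [lc_eq_sum, lc_eq_sum, Fin.sum_univ_castSucc]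
  simp

lemma lc_cons {M n : ℕ} (v : Fin M → Fin n) (c i : Fin n) :
    letterCount (Fin.cons c v) i = letterCount v i + if c = i then 1 else 0 := by
  rw [lc_eq_sum, lc_eq_sum, Fin.sum_univ_succ]
  simp [add_comm]

def good {n : ℕ} (cnt : Fin n → ℕ) (c : Fin n) : Prop :=
  ∀ i j : Fin n, (cnt i + if c = i then 1 else 0) ≤ (cnt j + if c = j then 1 else 0) + 1

lemma equitable_snoc_iff {M n : ℕ} (v : Fin M → Fin n) (c : Fin n) :
    Equitable (Fin.snoc v c) ↔ good (letterCount v) c := by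
  simp only [Equitable, good, lc_snoc]

lemma equitable_cons_iff {M n : ℕ} (v : Fin M → Fin n) (c : Fin n) :
    Equitable (Fin.cons c v) ↔ good (letterCount v) c := by
  simp only [Equitable, good, lc_cons]

lemma lemA {n r : ℕ} (hn : 2 ≤ n) (f : Fin n → ℕ)
    (heq : ∀ i j, f i ≤ f j + 1) (hsum : ∑ i, f i = r * n + 1) :
    ∃ b, f b = r + 1 ∧ ∀ i, i ≠ b → f i = r := by
  have hne : (Finset.univ : Finset (Fin n)).Nonempty := by
    simp [Finset.univ_nonempty_iff]
    exact Fin.pos_iff_nonempty.mp (by omega)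
  obtain ⟨a, -, ha⟩ := Finset.exists_min_image Finset.univ f hne
  have hcases : ∀ i, f i = f a ∨ f i = f a + 1 := by
    intro i
    have h1 := ha i (Finset.mem_univ i)
    have h2 := heq i a
    omega
  have hsum2 : ∑ i, f i = ∑ i : Fin n, (f a + if f i = f a + 1 then 1 else 0) := by
    apply Finset.sum_congr rfl
    intro i _
    rcases hcases i with h | h <;> simp [h]
  rw [hsum2] at hsum
  rw [Finset.sum_add_distrib, Finset.sum_const, Finset.card_univ, Fintype.card_fin,
    ← Finset.card_filter] at hsum
  set k := (Finset.univ.filter fun i => f i = f a + 1).card with hk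
  have hkn : k < n := by
    have : (Finset.univ.filter fun i => f i = f a + 1) ⊆ Finset.univ \ {a} := by
      intro x hx
      simp only [Finset.mem_filter] at hx
      simp only [Finset.mem_sdiff, Finset.mem_univ, Finset.mem_singleton, true_and]
      intro h; subst h; omega
    calc k ≤ (Finset.univ \ {a}).card := Finset.card_le_card this
      _ < n := by
        rw [Finset.card_sdiff_of_subset (by simp)]
        simp
        omega
  -- n • f a + k = r * n + 1 , so f a = r and k = 1
  rw [smul_eq_mul] at hsum
  have hfa : f a = r := by
    have h1 : (n * f a + k) / n = f a := by
      rw [Nat.mul_add_div (by omega), Nat.div_eq_of_lt hkn]; omega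
    have h2 : (r * n + 1) / n = r := by
      rw [mul_comm, Nat.mul_add_div (by omega), Nat.div_eq_of_lt (by omega)]
      omega
    rw [hsum, h2] at h1
    omega
  have hk1 : k = 1 := by
    rw [hfa, mul_comm] at hsum
    omega
  obtain ⟨b, hb⟩ := Finset.card_eq_one.mp
    (show (Finset.univ.filter fun i => f i = f a + 1).card = 1 by rw [← hk, hk1])
  refine ⟨b, ?_, ?_⟩
  · have : b ∈ Finset.univ.filter fun i => f i = f a + 1 := by rw [hb]; simp
    simp only [Finset.mem_filter] at this
    omega
  · intro i hi
    have : i ∉ Finset.univ.filter fun i => f i = f a + 1 := by rw [hb]; simpa using hi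
    simp only [Finset.mem_filter, Finset.mem_univ, true_and] at this
    rcases hcases i with h | h
    · omega
    · exact absurd h this

lemma snoc_repr {M n : ℕ} (v : Fin M → Fin n) (w : Fin (M+1) → Fin n)
    (hw : ∀ i : Fin M, w ⟨i.1, Nat.lt_succ_of_lt i.2⟩ = v i) :
    w = Fin.snoc v (w (Fin.last M)) := by
  funext p
  induction p using Fin.lastCases with
  | last => simp
  | cast j => rw [Fin.snoc_castSucc, ← hw j]; rfl

lemma cons_repr {M n : ℕ} (v : Fin M → Fin n) (w : Fin (M+1) → Fin n)
    (hw : ∀ i : Fin M, w ⟨i.1 + 1, Nat.succ_lt_succ i.2⟩ = v i) :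
    w = Fin.cons (w 0) v := by
  funext p
  induction p using Fin.cases with
  | zero => simp
  | succ j => rw [Fin.cons_succ, ← hw j]; rfl

def eqvSnoc {M n : ℕ} (v : Fin M → Fin n) :
    {w : Fin (M+1) → Fin n // Equitable w ∧
      ∀ i : Fin M, w ⟨i.1, Nat.lt_succ_of_lt i.2⟩ = v i} ≃
    {c : Fin n // good (letterCount v) c} where
  toFun w := ⟨w.1 (Fin.last M), by
    have h := snoc_repr v w.1 w.2.2
    have h2 := w.2.1
    rw [h] at h2
    exact (equitable_snoc_iff v _).mp h2⟩
  invFun c := ⟨Fin.snoc v c.1, (equitable_snoc_iff v c.1).mpr c.2,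
    fun i => by
      rw [show (⟨i.1, Nat.lt_succ_of_lt i.2⟩ : Fin (M+1)) = i.castSucc from Fin.ext rfl,
        Fin.snoc_castSucc]⟩
  left_inv w := Subtype.ext (snoc_repr v w.1 w.2.2).symm
  right_inv c := Subtype.ext (by simp)

def eqvCons {M n : ℕ} (v : Fin M → Fin n) :
    {w : Fin (M+1) → Fin n // Equitable w ∧
      ∀ i : Fin M, w ⟨i.1 + 1, Nat.succ_lt_succ i.2⟩ = v i} ≃
    {c : Fin n // good (letterCount v) c} where
  toFun w := ⟨w.1 0, by
    have h := cons_repr v w.1 w.2.2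
    have h2 := w.2.1
    rw [h] at h2
    exact (equitable_cons_iff v _).mp h2⟩
  invFun c := ⟨Fin.cons c.1 v, (equitable_cons_iff v c.1).mpr c.2,
    fun i => by
      rw [show (⟨i.1 + 1, Nat.succ_lt_succ i.2⟩ : Fin (M+1)) = i.succ from Fin.ext rfl,
        Fin.cons_succ]⟩
  left_inv w := Subtype.ext (cons_repr v w.1 w.2.2).symm
  right_inv c := Subtype.ext (by simp)

/-- Let `m ≡ 1 (mod n)` with `m > n ≥ 2`, `M = m - 1` and `r = M / n`.  In the
transition digraph on `M`-letter words extendable to equitable `m`-letter words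
(one edge per equitable `m`-letter word, from its prefix to its suffix of
length `M`), a vertex in which every letter appears exactly `r` times has
in-degree and out-degree `n`, and every other vertex has one letter appearing
`r - 1` times, one appearing `r + 1` times, the rest appearing `r` times, and
in-degree and out-degree `1`. -/
theorem stmt_9 (n m : ℕ) (hn : 2 ≤ n) (hm : n < m) (hmod : m % n = 1)
    (v : Fin (m - 1) → Fin n)
    (hv : ∃ w : Fin m → Fin n, Equitable w ∧
        ∀ i : Fin (m - 1), w ⟨i.1, by have := i.2; omega⟩ = v i) :
    ((∀ i : Fin n, letterCount v i = (m - 1) / n) →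
      Nat.card {w : Fin m → Fin n // Equitable w ∧
          ∀ i : Fin (m - 1), w ⟨i.1, by have := i.2; omega⟩ = v i} = n ∧
      Nat.card {w : Fin m → Fin n // Equitable w ∧
          ∀ i : Fin (m - 1), w ⟨i.1 + 1, by have := i.2; omega⟩ = v i} = n) ∧
    (¬ (∀ i : Fin n, letterCount v i = (m - 1) / n) →
      (∃ a b : Fin n, a ≠ b ∧
          letterCount v a = (m - 1) / n - 1 ∧ letterCount v b = (m - 1) / n + 1 ∧
          ∀ c : Fin n, c ≠ a → c ≠ b → letterCount v c = (m - 1) / n) ∧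
      Nat.card {w : Fin m → Fin n // Equitable w ∧
          ∀ i : Fin (m - 1), w ⟨i.1, by have := i.2; omega⟩ = v i} = 1 ∧
      Nat.card {w : Fin m → Fin n // Equitable w ∧
          ∀ i : Fin (m - 1), w ⟨i.1 + 1, by have := i.2; omega⟩ = v i} = 1) := by
  obtain ⟨M, rfl⟩ : ∃ M, m = M + 1 := ⟨m - 1, by omega⟩
  have hn0 : 0 < n := by omega
  have hq' : M = n * ((M + 1) / n) := by
    have h1 := Nat.div_add_mod (M + 1) n
    rw [hmod] at h1
    omega
  set q := (M + 1) / n with hqdef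
  have hq : M = n * q := hq'
  have hrq : (M + 1 - 1) / n = q := by
    show M / n = q
    rw [hq, Nat.mul_div_cancel_left _ hn0]
  have hq1 : 1 ≤ q := by
    rcases Nat.eq_zero_or_pos q with h | h
    · rw [h, mul_zero] at hq; omega
    · exact h
  have hsumv : ∑ i, letterCount v i = M := sum_lc v
  constructor
  · -- all counts equal q
    intro hall
    rw [hrq] at hall
    have hgood : ∀ c, good (letterCount v) c := by
      intro c i j
      rw [hall i, hall j]
      split <;> split <;> omega
    have hcard : Nat.card {c : Fin n // good (letterCount v) c} = n := by
      rw [Nat.card_congr (Equiv.subtypeUnivEquiv hgood), Nat.card_eq_fintype_card,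
        Fintype.card_fin]
    exact ⟨(Nat.card_congr (eqvSnoc v)).trans hcard,
      (Nat.card_congr (eqvCons v)).trans hcard⟩
  · -- not all counts equal q
    intro hnall
    rw [hrq] at hnall ⊢
    obtain ⟨w, hwEq, hwPre⟩ := hv
    have hw : w = Fin.snoc v (w (Fin.last M)) := snoc_repr v w hwPre
    set c0 := w (Fin.last M) with hc0
    have hgw : ∀ i, letterCount w i = letterCount v i + if c0 = i then 1 else 0 :=
      fun i => by rw [hw]; exact lc_snoc v c0 i
    have hsumw : ∑ i, letterCount w i = q * n + 1 := by
      rw [sum_lc, hq, mul_comm]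
    obtain ⟨b, hb, hrest⟩ := lemA hn (letterCount w) hwEq hsumw
    have hc0b : c0 ≠ b := by
      intro h
      apply hnall
      intro i
      by_cases hib : i = b
      · have h1 := hgw b
        rw [if_pos h] at h1
        rw [hib]; omega
      · have h1 := hgw i
        rw [if_neg (show ¬ c0 = i by rw [h]; exact fun hh => hib hh.symm)] at h1
        have h2 := hrest i hib
        omega
    have hva : letterCount v c0 = q - 1 := by
      have h1 := hgw c0
      rw [if_pos rfl] at h1
      have h2 := hrest c0 hc0b
      omega
    have hvb : letterCount v b = q + 1 := by
      have h1 := hgw b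
      rw [if_neg hc0b] at h1
      omega
    have hvc : ∀ c, c ≠ c0 → c ≠ b → letterCount v c = q := by
      intro c h1 h2
      have h3 := hgw c
      rw [if_neg (fun h => h1 h.symm)] at h3
      have h4 := hrest c h2
      omega
    have hgoodiff : ∀ c, good (letterCount v) c ↔ c = c0 := by
      intro c
      constructor
      · intro hg
        by_contra hca
        by_cases hcb : c = b
        · have h1 := hg b c0
          rw [if_pos hcb, if_neg hca] at h1
          omega
        · have h1 := hg c c0
          rw [if_pos rfl, if_neg hca] at h1
          have h2 := hvc c hca hcb
          omega
      · rintro rfl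
        intro i j
        have hi : letterCount v i + (if c0 = i then 1 else 0) ≤ q + 1 := by
          by_cases h1 : i = c0
          · subst h1; rw [if_pos rfl, hva]; omega
          · rw [if_neg (Ne.symm h1)]
            by_cases h2 : i = b
            · subst h2; omega
            · rw [hvc i h1 h2]; omega
        have hj : q ≤ letterCount v j + (if c0 = j then 1 else 0) := by
          by_cases h1 : j = c0
          · subst h1; rw [if_pos rfl, hva]; omega
          · rw [if_neg (Ne.symm h1)]
            by_cases h2 : j = b
            · subst h2; omega
            · rw [hvc j h1 h2]; omega
        omega
    have hcard : Nat.card {c : Fin n // good (letterCount v) c} = 1 := by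
      rw [Nat.card_eq_one_iff_unique]
      refine ⟨⟨fun x y => Subtype.ext (by rw [(hgoodiff x.1).mp x.2, (hgoodiff y.1).mp y.2])⟩,
        ⟨⟨c0, (hgoodiff c0).mpr rfl⟩⟩⟩
    refine ⟨⟨c0, b, hc0b, hva, hvb, fun c h1 h2 => hvc c h1 h2⟩,
      (Nat.card_congr (eqvSnoc v)).trans hcard,
      (Nat.card_congr (eqvCons v)).trans hcard⟩
end

section
/- Let m ≡ k (mod n) with 2 ≤ k ≤ n-1, and M = m-1, r = (m-k)/n. Any (m-1)-letter word on [n] extendable to an equitable m-letter word either has n-k+1 letters occurring r times and k-1 letters occurring r+1 times (in which case it has out-degree n-k+1 in the transition digraph), or has n-k-1 letters occurring r times, k letters occurring r+1 times, and one letter occurring r-1 times (in which case it has out-degree 1). -/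
lemma sum_letterCount {m n : ℕ} (w : Fin m → Fin n) :
    ∑ i : Fin n, letterCount w i = m := by
  classical
  have := Finset.card_eq_sum_card_fiberwise
    (f := w) (s := Finset.univ) (t := Finset.univ) (fun x _ => Finset.mem_univ _)
  simpa [letterCount] using this.symm

lemma equitable_mem {m n q k : ℕ} (hn : 0 < n) (hm : m = n * q + k) (hk : 0 < k)
    (hkn : k < n) (w : Fin m → Fin n) (hw : Equitable w) (i : Fin n) :
    letterCount w i = q ∨ letterCount w i = q + 1 := by
  classical
  have hsum := sum_letterCount w
  have h1 : ∑ j : Fin n, letterCount w j ≤ ∑ _j : Fin n, (letterCount w i + 1) :=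
    Finset.sum_le_sum fun j _ => hw j i
  have h2 : ∑ _j : Fin n, letterCount w i ≤ ∑ j : Fin n, (letterCount w j + 1) :=
    Finset.sum_le_sum fun j _ => hw i j
  simp [Finset.sum_add_distrib, Finset.sum_const, hsum] at h1 h2
  -- h1 : m ≤ n * (letterCount w i) + n ?  h2 : n * letterCount w i ≤ m + n ?
  by_contra hcon
  push_neg at hcon
  rcases lt_or_ge (letterCount w i) q with hlt | hge
  · have hmul : n * (letterCount w i + 1) ≤ n * q := Nat.mul_le_mul_left n (by omega)
    have e1 : n * (letterCount w i + 1) = n * letterCount w i + n := by ring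
    omega
  · have hge2 : q + 2 ≤ letterCount w i := by omega
    have hmul : n * (q + 2) ≤ n * letterCount w i := Nat.mul_le_mul_left n hge2
    have e2 : n * (q + 2) = n * q + 2 * n := by ring
    omega

lemma equitable_filter_card {m n q k : ℕ} (hn : 0 < n) (hm : m = n * q + k) (hk : 0 < k)
    (hkn : k < n) (w : Fin m → Fin n) (hw : Equitable w) :
    (Finset.univ.filter fun i => letterCount w i = q + 1).card = k ∧
    (Finset.univ.filter fun i => letterCount w i = q).card = n - k := by
  classical
  have hmem := equitable_mem hn hm hk hkn w hw
  have hsum := sum_letterCount w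
  have h1 : ∑ i : Fin n, letterCount w i
      = ∑ i : Fin n, (q + if letterCount w i = q + 1 then 1 else 0) := by
    refine Finset.sum_congr rfl fun i _ => ?_
    rcases hmem i with h | h <;> simp [h]
  rw [Finset.sum_add_distrib, Finset.sum_const, Finset.sum_boole] at h1
  simp at h1
  have hB : (Finset.univ.filter fun i => letterCount w i = q + 1).card = k := by omega
  have hpart := Finset.card_filter_add_card_filter_not
    (s := (Finset.univ : Finset (Fin n))) (p := fun i => letterCount w i = q + 1)
  have hneg : (Finset.univ.filter fun i => ¬ letterCount w i = q + 1)
      = (Finset.univ.filter fun i => letterCount w i = q) := by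
    refine Finset.filter_congr fun i _ => ?_
    rcases hmem i with h | h <;> simp [h]
  rw [hneg] at hpart
  simp at hpart
  exact ⟨hB, by omega⟩

lemma equitable_of_counts {m n q : ℕ} (w : Fin m → Fin n)
    (h : ∀ i, letterCount w i = q ∨ letterCount w i = q + 1) : Equitable w := fun i j => by
  rcases h i with h1 | h1 <;> rcases h j with h2 | h2 <;> omega

lemma count_prefix {M n : ℕ} (w : Fin (M + 1) → Fin n) (v : Fin M → Fin n)
    (hvw : ∀ i : Fin M, w i.castSucc = v i) (i : Fin n) :
    letterCount w i = letterCount v i + (if w (Fin.last M) = i then 1 else 0) := by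
  classical
  unfold letterCount
  rw [Finset.card_filter, Finset.card_filter, Fin.sum_univ_castSucc]
  simp [hvw]

def extWord {M n : ℕ} (v : Fin M → Fin n) (x : Fin n) : Fin (M + 1) → Fin n :=
  fun p => if h : p.1 < M then v ⟨p.1, h⟩ else x

lemma ext_eq {M n : ℕ} (v : Fin M → Fin n) (w : Fin (M + 1) → Fin n)
    (h : ∀ i : Fin M, w i.castSucc = v i) : w = extWord v (w (Fin.last M)) := by
  funext p
  by_cases hp : p.1 < M
  · have hpe : p = Fin.castSucc ⟨p.1, hp⟩ := Fin.ext rfl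
    rw [hpe, h]
    simp only [extWord, Fin.coe_castSucc]
    rw [dif_pos hp]
  · have hpe : p = Fin.last M := Fin.ext (by have := p.2; simp [Fin.last]; omega)
    subst hpe
    simp [extWord]

def extEquiv {M n : ℕ} (v : Fin M → Fin n) :
    {w : Fin (M + 1) → Fin n // Equitable w ∧ ∀ i : Fin M, w i.castSucc = v i} ≃
    {x : Fin n // Equitable (extWord v x)} where
  toFun w := ⟨w.1 (Fin.last M), by rw [← ext_eq v w.1 w.2.2]; exact w.2.1⟩
  invFun x := ⟨extWord v x.1, by
    constructor
    · exact x.2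
    · intro i; simp [extWord]⟩
  left_inv w := Subtype.ext (ext_eq v w.1 w.2.2).symm
  right_inv x := Subtype.ext (by simp [extWord])

/-- Let `m ≡ k (mod n)` with `2 ≤ k ≤ n - 1` and `r = (m - k) / n`.  Any
`(m-1)`-letter word on `[n]` extendable to an equitable `m`-letter word either
has `n - k + 1` letters occurring `r` times and `k - 1` letters occurring
`r + 1` times, and out-degree `n - k + 1` in the transition digraph (the number
of equitable `m`-letter words with this prefix), or it has `n - k - 1` letters
occurring `r` times, `k` letters occurring `r + 1` times and one letter
occurring `r - 1` times, and out-degree `1`. -/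
theorem stmt_12 (n m k : ℕ) (hk2 : 2 ≤ k) (hkn : k ≤ n - 1) (hmod : m % n = k)
    (v : Fin (m - 1) → Fin n)
    (hv : ∃ w : Fin m → Fin n, Equitable w ∧
        ∀ i : Fin (m - 1), w ⟨i.1, by have := i.2; omega⟩ = v i) :
    ((Finset.univ.filter fun i : Fin n => letterCount v i = (m - k) / n).card = n - k + 1 ∧
     (Finset.univ.filter fun i : Fin n => letterCount v i = (m - k) / n + 1).card = k - 1 ∧
     Nat.card {w : Fin m → Fin n // Equitable w ∧
        ∀ i : Fin (m - 1), w ⟨i.1, by have := i.2; omega⟩ = v i} = n - k + 1) ∨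
    ((Finset.univ.filter fun i : Fin n => letterCount v i = (m - k) / n).card = n - k - 1 ∧
     (Finset.univ.filter fun i : Fin n => letterCount v i = (m - k) / n + 1).card = k ∧
     (Finset.univ.filter fun i : Fin n => letterCount v i = (m - k) / n - 1).card = 1 ∧
     Nat.card {w : Fin m → Fin n // Equitable w ∧
        ∀ i : Fin (m - 1), w ⟨i.1, by have := i.2; omega⟩ = v i} = 1) := by
  classical
  have hn : 0 < n := by omega
  have hknn : k < n := by omega
  have hm2 : 2 ≤ m := by
    have h1 : m % n ≤ m := Nat.mod_le m n
    omega
  obtain ⟨M, rfl⟩ : ∃ M, m = M + 1 := ⟨m - 1, by omega⟩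
  set q := (M + 1 - k) / n with hq
  obtain ⟨w, hw, hvw⟩ := hv
  have hdm : M + 1 = n * ((M + 1) / n) + k := by
    conv_lhs => rw [← Nat.div_add_mod (M + 1) n]
    rw [hmod]
  have hqq : q = (M + 1) / n := by
    rw [hq]
    have he : M + 1 - k = n * ((M + 1) / n) := by omega
    rw [he, Nat.mul_div_cancel_left _ hn]
  have hm : M + 1 = n * q + k := by rw [hqq]; exact hdm
  clear_value q
  clear hq hqq hdm
  have hk : 0 < k := by omega
  have hmem := equitable_mem hn hm hk hknn w hw
  obtain ⟨hB, hA⟩ := equitable_filter_card hn hm hk hknn w hw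
  set x := w (Fin.last M) with hx
  have hvw' : ∀ i : Fin M, w i.castSucc = v i := fun i => hvw i
  have hcount : ∀ i, letterCount w i = letterCount v i + (if x = i then 1 else 0) :=
    count_prefix (M := M) w v hvw'
  clear_value x
  have hvxne : ∀ i, i ≠ x → letterCount v i = letterCount w i := by
    intro i h
    have h' := hcount i
    rw [if_neg (fun h'' => h h''.symm)] at h'
    omega
  have hx1 : 1 ≤ letterCount w x :=
    Finset.card_pos.mpr ⟨Fin.last M, Finset.mem_filter.mpr ⟨Finset.mem_univ _, hx.symm⟩⟩
  have hcnt_ext : ∀ (y : Fin n) (i : Fin n),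
      letterCount (extWord v y) i = letterCount v i + (if y = i then 1 else 0) := by
    intro y i
    have hvwE : ∀ j : Fin M, extWord (M := M) v y j.castSucc = v j := by
      intro j
      simp only [extWord, Fin.coe_castSucc]
      exact dif_pos j.2
    have h1 := count_prefix (M := M) (extWord (M := M) v y) v hvwE i
    have h2 : extWord (M := M) v y (Fin.last M) = y := by
      simp only [extWord, Fin.val_last]
      exact dif_neg (lt_irrefl M)
    rwa [h2] at h1
  have e1 : {y : Fin n // Equitable (extWord (M := M) v y)} ≃
      {y : Fin n // y ∈ Finset.univ.filter fun y => Equitable (extWord (M := M) v y)} :=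
    Equiv.subtypeEquivRight (fun y => by simp)
  rcases hmem x with hxq | hxq1
  · -- removed letter had count q in w : case 2 (Or.inr)
    refine Or.inr ?_
    have hq1 : 1 ≤ q := by omega
    have hcvx : letterCount v x + 1 = q := by
      have := hcount x; simp at this; omega
    have hg1 : (Finset.univ.filter fun i : Fin n => letterCount v i = q)
        = (Finset.univ.filter fun i : Fin n => letterCount w i = q).erase x := by
      ext i
      rcases eq_or_ne i x with rfl | h
      · simp [Finset.mem_erase]
        omega
      · simp [Finset.mem_erase, h, hvxne i h]
    have hg2 : (Finset.univ.filter fun i : Fin n => letterCount v i = q + 1)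
        = (Finset.univ.filter fun i : Fin n => letterCount w i = q + 1) := by
      ext i
      rcases eq_or_ne i x with rfl | h
      · simp; omega
      · simp [hvxne i h]
    have hg3 : (Finset.univ.filter fun i : Fin n => letterCount v i = q - 1) = {x} := by
      ext i
      rcases eq_or_ne i x with rfl | h
      · simp; omega
      · simp [h, hvxne i h]
        rcases hmem i with h' | h' <;> omega
    refine ⟨?_, ?_, ?_, ?_⟩
    · rw [hg1, Finset.card_erase_of_mem (by simp [hxq]), hA]
    · rw [hg2, hB]
    · rw [hg3, Finset.card_singleton]
    · have hfX : (Finset.univ.filter fun y : Fin n =>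
          Equitable (extWord (M := M) v y)).card = 1 := by
        have : (Finset.univ.filter fun y : Fin n => Equitable (extWord (M := M) v y)) = {x} := by
          ext y
          simp only [Finset.mem_filter, Finset.mem_univ, true_and, Finset.mem_singleton]
          constructor
          · intro he
            have hmm := equitable_mem hn hm hk hknn _ he x
            rw [hcnt_ext y x] at hmm
            by_contra hne
            simp [hne] at hmm
            omega
          · rintro rfl
            refine equitable_of_counts (q := q) _ (fun i => ?_)
            rw [hcnt_ext y i]
            rcases eq_or_ne i y with rfl | h
            · simp; omega
            · rw [if_neg (fun h' : y = i => h h'.symm), hvxne i h]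
              simpa using hmem i
        rw [this, Finset.card_singleton]
      exact (Nat.card_congr ((extEquiv (M := M) v).trans e1)).trans
        ((Nat.card_eq_finsetCard _).trans hfX)
  · -- removed letter had count q+1 in w : case 1 (Or.inl)
    refine Or.inl ?_
    have hcvx : letterCount v x = q := by
      have := hcount x; simp at this; omega
    have hcvmem : ∀ i, letterCount v i = q ∨ letterCount v i = q + 1 := by
      intro i
      rcases eq_or_ne i x with rfl | h
      · exact Or.inl hcvx
      · rw [hvxne i h]; exact hmem i
    have hg1 : (Finset.univ.filter fun i : Fin n => letterCount v i = q)
        = insert x (Finset.univ.filter fun i : Fin n => letterCount w i = q) := by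
      ext i
      rcases eq_or_ne i x with rfl | h
      · simp [hcvx]
      · simp [h, hvxne i h]
    have hg2 : (Finset.univ.filter fun i : Fin n => letterCount v i = q + 1)
        = (Finset.univ.filter fun i : Fin n => letterCount w i = q + 1).erase x := by
      ext i
      rcases eq_or_ne i x with rfl | h
      · simp [Finset.mem_erase]; omega
      · simp [Finset.mem_erase, h, hvxne i h]
    refine ⟨?_, ?_, ?_⟩
    · rw [hg1, Finset.card_insert_of_notMem (by simp [hxq1]), hA]
    · rw [hg2, Finset.card_erase_of_mem (by simp [hxq1]), hB]
    · have hfe : (Finset.univ.filter fun y : Fin n => Equitable (extWord (M := M) v y))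
          = (Finset.univ.filter fun i : Fin n => letterCount v i = q) := by
        ext y
        simp only [Finset.mem_filter, Finset.mem_univ, true_and]
        constructor
        · intro he
          have hmm := equitable_mem hn hm hk hknn _ he y
          rw [hcnt_ext y y] at hmm
          simp at hmm
          rcases hcvmem y with h' | h' <;> omega
        · intro hcy
          refine equitable_of_counts (q := q) _ (fun i => ?_)
          rw [hcnt_ext y i]
          rcases eq_or_ne y i with rfl | h
          · simp [hcy]
          · simp [h]
            exact hcvmem i
      have hfX : (Finset.univ.filter fun y : Fin n =>
          Equitable (extWord (M := M) v y)).card = n - k + 1 := by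
        rw [hfe, hg1, Finset.card_insert_of_notMem (by simp [hxq1]), hA]
      exact (Nat.card_congr ((extEquiv (M := M) v).trans e1)).trans
        ((Nat.card_eq_finsetCard _).trans hfX)
end

section
/- In the transition digraph for rankings of m competitors, whose vertices are (m-1)-letter words extendable to rankings of length m, every vertex containing the letter 1 has out-degree and in-degree exactly 2, and every vertex not containing the letter 1 has out-degree and in-degree exactly 1. -/
/-- A ranking (ranked permutation with ties) of `m` competitors: a word on the
positive integers containing 1, such that whenever a letter `a` occurs with
multiplicity `r` and some larger letter occurs, the least larger occurring
letter is `a + r`. -/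
def IsRanking (m : ℕ) (w : Fin m → ℕ) : Prop :=
  (∀ p, 1 ≤ w p) ∧ (∃ p, w p = 1) ∧
    ∀ a : ℕ, (∃ p, w p = a) → (∃ p, a < w p) →
      (∃ p, w p = a + (Finset.univ.filter fun q => w q = a).card) ∧
      ∀ b : ℕ, (∃ p, w p = b) → a < b →
        a + (Finset.univ.filter fun q => w q = a).card ≤ b

namespace Stmt17Aux

open Finset

variable {α : Type*} [Fintype α]

def cnt (w : α → ℕ) (a : ℕ) : ℕ := (univ.filter fun i => w i < a).card
def mult (w : α → ℕ) (a : ℕ) : ℕ := (univ.filter fun i => w i = a).card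
def occ (w : α → ℕ) (a : ℕ) : Prop := ∃ i, w i = a

lemma mult_pos {w : α → ℕ} {a : ℕ} (h : occ w a) : 0 < mult w a := by
  obtain ⟨i, hi⟩ := h
  exact Finset.card_pos.mpr ⟨i, by simp [hi]⟩

lemma cnt_add_mult (w : α → ℕ) (a : ℕ) :
    cnt w a + mult w a = (univ.filter fun i => w i ≤ a).card := by
  classical
  rw [cnt, mult, ← Finset.card_union_of_disjoint ?hd, ← Finset.filter_or]
  · exact congrArg card (Finset.filter_congr fun i _ => by omega)
  case hd =>
    rw [Finset.disjoint_left]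
    intro i hi hj
    simp only [mem_filter, mem_univ, true_and] at hi hj
    omega

lemma cnt_add_mult_le {w : α → ℕ} {a b : ℕ} (h : a < b) : cnt w a + mult w a ≤ cnt w b := by
  rw [cnt_add_mult, cnt]
  apply Finset.card_le_card
  intro i hi
  simp only [mem_filter, mem_univ, true_and] at *
  omega

lemma cnt_split {w : α → ℕ} {a b : ℕ} (h : ∀ i, w i < b → w i ≤ a) (hab : a < b) :
    cnt w b = cnt w a + mult w a := by
  rw [cnt_add_mult, cnt]
  refine congrArg card (Finset.filter_congr fun i _ => ?_)
  constructor
  · intro hi; exact h i hi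
  · intro hi; omega

lemma rank_char {m : ℕ} (hm : 1 ≤ m) (w : Fin m → ℕ) :
    IsRanking m w ↔ ∀ a, occ w a → a = 1 + cnt w a := by
  constructor
  · intro h a
    induction a using Nat.strong_induction_on with
    | _ a ih =>
      intro ha
      by_cases hc : cnt w a = 0
      · obtain ⟨p1, hp1⟩ := h.2.1
        obtain ⟨p, hp⟩ := ha
        have hn : ¬ (w p1 < a) := by
          intro hlt
          have : 0 < cnt w a := Finset.card_pos.mpr ⟨p1, by simp [hlt]⟩
          omega
        have := h.1 p
        omega
      · have hne : (univ.filter fun i => w i < a).Nonempty := by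
          rw [← Finset.card_pos]
          unfold cnt at hc; omega
        obtain ⟨q, hq, hqmax⟩ := Finset.exists_max_image _ w hne
        simp only [mem_filter, mem_univ, true_and] at hq
        have hmax : ∀ i, w i < a → w i ≤ w q := fun i hi => hqmax i (by simp [hi])
        have iha' : w q = 1 + cnt w (w q) := ih (w q) hq ⟨q, rfl⟩
        obtain ⟨p, hp⟩ := ha
        obtain ⟨hex, hleast⟩ := h.2.2 (w q) ⟨q, rfl⟩ ⟨p, by omega⟩
        have hmeq : (Finset.univ.filter fun r => w r = w q).card = mult w (w q) := rfl
        rw [hmeq] at hex hleast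
        have hub : w q + mult w (w q) ≤ a := hleast a ⟨p, hp⟩ hq
        have hmp : 0 < mult w (w q) := mult_pos ⟨q, rfl⟩
        obtain ⟨p', hp'⟩ := hex
        have heq : w q + mult w (w q) = a := by
          by_contra hne'
          have hlt : w p' < a := by omega
          have := hmax p' hlt
          omega
        have hsplit := cnt_split (w := w) hmax hq
        omega
  · intro H
    refine ⟨fun p => ?_, ?_, ?_⟩
    · have := H (w p) ⟨p, rfl⟩; omega
    · have : Nonempty (Fin m) := ⟨⟨0, hm⟩⟩
      obtain ⟨q, _, hqmin⟩ := Finset.exists_min_image univ w univ_nonempty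
      have h0 : cnt w (w q) = 0 := by
        rw [cnt, Finset.card_eq_zero, Finset.filter_eq_empty_iff]
        intro i _
        have := hqmin i (mem_univ i)
        omega
      have := H (w q) ⟨q, rfl⟩
      exact ⟨q, by omega⟩
    · intro a ha hgt
      have hmeq : (Finset.univ.filter fun q => w q = a).card = mult w a := rfl
      rw [hmeq]
      obtain ⟨p, hp⟩ := hgt
      constructor
      · have hne : (univ.filter fun i => a < w i).Nonempty := ⟨p, by simp [hp]⟩
        obtain ⟨q, hq, hqmin⟩ := Finset.exists_min_image _ w hne
        simp only [mem_filter, mem_univ, true_and] at hq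
        have hmin : ∀ i, a < w i → w q ≤ w i := fun i hi => hqmin i (by simp [hi])
        have h1 := H (w q) ⟨q, rfl⟩
        have h2 := H a ha
        have hsplit : cnt w (w q) = cnt w a + mult w a := by
          refine cnt_split (fun i hi => ?_) hq
          by_contra hc
          push_neg at hc
          have := hmin i hc
          omega
        exact ⟨q, by omega⟩
      · intro b hb hab
        have h1 := H b hb
        have h2 := H a ha
        have := cnt_add_mult_le (w := w) hab
        omega

def P {n : ℕ} (v : Fin n → ℕ) (x : ℕ) : Prop :=
  x = 1 + cnt v x ∧ ∀ a, occ v a →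
    (a ≤ x → a = 1 + cnt v a) ∧ (x < a → a = 2 + cnt v a)

lemma P_iff {n : ℕ} (v : Fin n → ℕ) (x : ℕ) :
    P v x ↔ ∀ a, (occ v a ∨ x = a) → a = 1 + (cnt v a + if x < a then 1 else 0) := by
  constructor
  · rintro ⟨h1, h2⟩ a (ha | rfl)
    · obtain ⟨c1, c2⟩ := h2 a ha
      rcases le_or_gt a x with h | h
      · rw [if_neg (by omega)]; have := c1 h; omega
      · rw [if_pos h]; have := c2 h; omega
    · rw [if_neg (lt_irrefl x)]; omega
  · intro H
    refine ⟨by have := H x (Or.inr rfl); rw [if_neg (lt_irrefl x)] at this; omega,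
      fun a ha => ⟨fun h1 => ?_, fun h2 => ?_⟩⟩
    · have := H a (Or.inl ha); rw [if_neg (by omega)] at this; omega
    · have := H a (Or.inl ha); rw [if_pos h2] at this; omega

lemma cnt_snoc {n : ℕ} (v : Fin n → ℕ) (x a : ℕ) :
    cnt (Fin.snoc v x) a = cnt v a + if x < a then 1 else 0 := by
  unfold cnt
  rw [Finset.card_filter, Finset.card_filter, Fin.sum_univ_castSucc]
  simp

lemma cnt_cons {n : ℕ} (v : Fin n → ℕ) (x a : ℕ) :
    cnt (Fin.cons x v) a = cnt v a + if x < a then 1 else 0 := by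
  unfold cnt
  rw [Finset.card_filter, Finset.card_filter, Fin.sum_univ_succ]
  simp [Nat.add_comm]

lemma occ_snoc {n : ℕ} {v : Fin n → ℕ} {x a : ℕ} :
    occ (Fin.snoc v x) a ↔ occ v a ∨ x = a := by
  constructor
  · rintro ⟨p, hp⟩
    induction p using Fin.lastCases with
    | last => right; simpa using hp
    | cast i => left; exact ⟨i, by simpa using hp⟩
  · rintro (⟨i, hi⟩ | rfl)
    · exact ⟨i.castSucc, by simp [hi]⟩
    · exact ⟨Fin.last n, by simp⟩

lemma occ_cons {n : ℕ} {v : Fin n → ℕ} {x a : ℕ} :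
    occ (Fin.cons x v) a ↔ occ v a ∨ x = a := by
  constructor
  · rintro ⟨p, hp⟩
    induction p using Fin.cases with
    | zero => right; simpa using hp
    | succ i => left; exact ⟨i, by simpa using hp⟩
  · rintro (⟨i, hi⟩ | rfl)
    · exact ⟨i.succ, by simp [hi]⟩
    · exact ⟨0, by simp⟩


lemma rank_snoc_iff {n : ℕ} (v : Fin n → ℕ) (x : ℕ) :
    IsRanking (n + 1) (Fin.snoc v x) ↔ P v x := by
  rw [rank_char (Nat.le_add_left 1 n), P_iff]
  apply forall_congr'
  intro a
  rw [cnt_snoc]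
  constructor
  · intro h ha; exact h (occ_snoc.mpr ha)
  · intro h ha; exact h (occ_snoc.mp ha)

lemma rank_cons_iff {n : ℕ} (v : Fin n → ℕ) (x : ℕ) :
    IsRanking (n + 1) (Fin.cons x v) ↔ P v x := by
  rw [rank_char (Nat.le_add_left 1 n), P_iff]
  apply forall_congr'
  intro a
  rw [cnt_cons]
  constructor
  · intro h ha; exact h (occ_cons.mpr ha)
  · intro h ha; exact h (occ_cons.mp ha)

lemma card_pre {n : ℕ} (v : Fin n → ℕ) (f : Fin n → Fin (n + 1))
    (hf : ∀ i, (f i : ℕ) = i.1) :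
    Nat.card {w : Fin (n + 1) → ℕ // IsRanking (n + 1) w ∧ ∀ i, w (f i) = v i}
      = Nat.card {x : ℕ // P v x} := by
  have hfe : f = Fin.castSucc := funext fun i => Fin.ext (by simp [hf i])
  subst hfe
  apply Nat.card_congr
  refine ⟨fun w => ⟨w.1 (Fin.last n), ?_⟩,
    fun x => ⟨Fin.snoc v x.1, (rank_snoc_iff v x.1).mpr x.2, fun i => by simp⟩, ?_, ?_⟩
  · have he : w.1 = Fin.snoc v (w.1 (Fin.last n)) := by
      funext p
      induction p using Fin.lastCases with
      | last => simp
      | cast i => simp [w.2.2 i]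
    have hw := w.2.1
    rw [he] at hw
    exact (rank_snoc_iff v _).mp hw
  · intro w
    refine Subtype.ext ?_
    funext p
    induction p using Fin.lastCases with
    | last => simp
    | cast i => simp [w.2.2 i]
  · intro x
    exact Subtype.ext (by simp)

lemma card_suf {n : ℕ} (v : Fin n → ℕ) (f : Fin n → Fin (n + 1))
    (hf : ∀ i, (f i : ℕ) = i.1 + 1) :
    Nat.card {w : Fin (n + 1) → ℕ // IsRanking (n + 1) w ∧ ∀ i, w (f i) = v i}
      = Nat.card {x : ℕ // P v x} := by
  have hfe : f = Fin.succ := funext fun i => Fin.ext (by simp [hf i])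
  subst hfe
  apply Nat.card_congr
  refine ⟨fun w => ⟨w.1 0, ?_⟩,
    fun x => ⟨Fin.cons x.1 v, (rank_cons_iff v x.1).mpr x.2, fun i => by simp⟩, ?_, ?_⟩
  · have he : w.1 = Fin.cons (w.1 0) v := by
      funext p
      induction p using Fin.cases with
      | zero => simp
      | succ i => simp [w.2.2 i]
    have hw := w.2.1
    rw [he] at hw
    exact (rank_cons_iff v _).mp hw
  · intro w
    refine Subtype.ext ?_
    funext p
    induction p using Fin.cases with
    | zero => simp
    | succ i => simp [w.2.2 i]
  · intro x
    exact Subtype.ext (by simp)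


lemma occ_of_mult_pos {α : Type*} [Fintype α] {w : α → ℕ} {a : ℕ}
    (h : 0 < mult w a) : occ w a := by
  obtain ⟨i, hi⟩ := Finset.card_pos.mp h
  simp only [mem_filter, mem_univ, true_and] at hi
  exact ⟨i, hi⟩

lemma no_mid {n : ℕ} {v : Fin n → ℕ} {x y : ℕ} (hx : P v x) (hy : P v y) :
    ∀ a, occ v a → ¬(x < a ∧ a ≤ y) := by
  rintro a ha ⟨h1, h2⟩
  have := (hx.2 a ha).2 h1
  have := (hy.2 a ha).1 h2
  omega

lemma occ_lower {n : ℕ} {v : Fin n → ℕ} {x y : ℕ} (hx : P v x) (hy : P v y)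
    (hxy : x < y) : occ v x := by
  have hsub : cnt v y = cnt v x + mult v x := by
    refine cnt_split (fun i hi => ?_) hxy
    by_contra hc
    push_neg at hc
    exact no_mid hx hy (v i) ⟨i, rfl⟩ ⟨hc, le_of_lt hi⟩
  have h1 := hx.1
  have h2 := hy.1
  exact occ_of_mult_pos (by omega)

lemma no_three {n : ℕ} {v : Fin n → ℕ} {x y z : ℕ} (hx : P v x) (hy : P v y) (hz : P v z)
    (h1 : x < y) (h2 : y < z) : False :=
  no_mid hx hy y (occ_lower hy hz h2) ⟨h1, le_refl y⟩

lemma P_top {n : ℕ} {v : Fin n → ℕ} {x : ℕ} (hx : P v x) (hocc : occ v x) :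
    P v (x + mult v x) := by
  have hm : 0 < mult v x := mult_pos hocc
  have key : ∀ a, occ v a → x < a → x + mult v x < a := by
    intro a ha hlt
    have h2 := (hx.2 a ha).2 hlt
    have h3 := cnt_add_mult_le (w := v) hlt
    have h1 := hx.1
    omega
  have hcnt : cnt v (x + mult v x) = cnt v x + mult v x := by
    refine cnt_split (fun i hi => ?_) (by omega)
    by_contra hc
    push_neg at hc
    have := key (v i) ⟨i, rfl⟩ hc
    omega
  refine ⟨by have := hx.1; omega, fun a ha => ⟨fun hle => ?_, fun hgt => ?_⟩⟩
  · have hax : a ≤ x := by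
      by_contra hc
      push_neg at hc
      have := key a ha hc
      omega
    exact (hx.2 a ha).1 hax
  · exact (hx.2 a ha).2 (by omega)

lemma P_lower {n : ℕ} {v : Fin n → ℕ} {x : ℕ} (hx : P v x) (hnocc : ¬ occ v x)
    (hone : occ v 1) : ∃ y < x, P v y := by
  have hx1 : x ≠ 1 := by rintro rfl; exact hnocc hone
  have hxge : 2 ≤ x := by have := hx.1; omega
  have hcpos : 0 < cnt v x := by
    obtain ⟨i, hi⟩ := hone
    exact Finset.card_pos.mpr ⟨i, by simp [hi]; omega⟩
  have hne : (univ.filter fun i => v i < x).Nonempty := by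
    rw [← Finset.card_pos]; exact hcpos
  obtain ⟨q, hq, hqmax⟩ := Finset.exists_max_image _ v hne
  simp only [mem_filter, mem_univ, true_and] at hq
  have hmax : ∀ i, v i < x → v i ≤ v q := fun i hi => hqmax i (by simp [hi])
  have hy1 : v q = 1 + cnt v (v q) := (hx.2 (v q) ⟨q, rfl⟩).1 (le_of_lt hq)
  refine ⟨v q, hq, hy1, fun a ha => ⟨fun hle => (hx.2 a ha).1 (by omega), fun hgt => ?_⟩⟩
  have hxa : x < a := by
    rcases lt_trichotomy a x with h | h | h
    · obtain ⟨i, hi⟩ := ha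
      have := hmax i (by omega)
      omega
    · subst h; exact absurd ha hnocc
    · exact h
  exact (hx.2 a ha).2 (by omega)

lemma card_P_one {n : ℕ} {v : Fin n → ℕ} (hex : ∃ x, P v x) (hone : ¬ occ v 1) :
    Nat.card {x : ℕ // P v x} = 1 := by
  obtain ⟨x0, hx0⟩ := hex
  have hall : ∀ x, P v x → x = 1 := by
    intro x hx
    by_contra hne
    have hx1 : 2 ≤ x := by have := hx.1; omega
    have hcpos : 0 < cnt v x := by have := hx.1; omega
    have hne' : (univ.filter fun i => v i < x).Nonempty := by
      rw [← Finset.card_pos]; exact hcpos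
    obtain ⟨q, hq, hqmin⟩ := Finset.exists_min_image _ v hne'
    simp only [mem_filter, mem_univ, true_and] at hq
    have h0 : cnt v (v q) = 0 := by
      rw [cnt, Finset.card_eq_zero, Finset.filter_eq_empty_iff]
      intro i _ hc
      have := hqmin i (by simp only [mem_filter, mem_univ, true_and]; omega)
      omega
    have := (hx.2 (v q) ⟨q, rfl⟩).1 (le_of_lt hq)
    exact hone ⟨q, by omega⟩
  rw [Nat.card_eq_one_iff_unique]
  exact ⟨⟨fun a b => Subtype.ext (by rw [hall _ a.2, hall _ b.2])⟩, ⟨⟨x0, hx0⟩⟩⟩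

lemma card_P_two {n : ℕ} {v : Fin n → ℕ} (hex : ∃ x, P v x) (hone : occ v 1) :
    Nat.card {x : ℕ // P v x} = 2 := by
  obtain ⟨x0, hx0⟩ := hex
  obtain ⟨a, b, hab, ha, hb⟩ : ∃ a b, a < b ∧ P v a ∧ P v b := by
    by_cases hocc : occ v x0
    · exact ⟨x0, x0 + mult v x0, by have := mult_pos hocc; omega, hx0, P_top hx0 hocc⟩
    · obtain ⟨y, hlt, hy⟩ := P_lower hx0 hocc hone
      exact ⟨y, x0, hlt, hy, hx0⟩
  have hall : ∀ x, P v x ↔ x ∈ ({a, b} : Set ℕ) := by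
    intro x
    constructor
    · intro hx
      rcases lt_trichotomy x a with h | h | h
      · exact (no_three hx ha hb h hab).elim
      · exact Or.inl h
      rcases lt_trichotomy x b with h' | h' | h'
      · exact (no_three ha hx hb h h').elim
      · exact Or.inr h'
      · exact (no_three ha hb hx hab h').elim
    · rintro (rfl | rfl)
      exacts [ha, hb]
  rw [Nat.card_congr (Equiv.subtypeEquivRight hall), Nat.card_coe_set_eq,
    Set.ncard_pair (Nat.ne_of_lt hab)]


end Stmt17Aux

open Stmt17Aux

/-- In the transition digraph for rankings of `m ≥ 2` competitors, whose
vertices are the `(m-1)`-letter words extendable to rankings of length `m`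
(with one edge per ranking, from its length-`(m-1)` prefix to its
length-`(m-1)` suffix), every vertex containing the letter 1 has out-degree
and in-degree exactly 2, and every vertex not containing the letter 1 has
out-degree and in-degree exactly 1. -/
theorem stmt_17 (m : ℕ) (hm : 2 ≤ m) (v : Fin (m - 1) → ℕ)
    (hv : ∃ w : Fin m → ℕ, IsRanking m w ∧
        ∀ i : Fin (m - 1), w ⟨i.1, by have := i.2; omega⟩ = v i) :
    ((∃ p, v p = 1) →
      Nat.card {w : Fin m → ℕ // IsRanking m w ∧
          ∀ i : Fin (m - 1), w ⟨i.1, by have := i.2; omega⟩ = v i} = 2 ∧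
      Nat.card {w : Fin m → ℕ // IsRanking m w ∧
          ∀ i : Fin (m - 1), w ⟨i.1 + 1, by have := i.2; omega⟩ = v i} = 2) ∧
    ((¬ ∃ p, v p = 1) →
      Nat.card {w : Fin m → ℕ // IsRanking m w ∧
          ∀ i : Fin (m - 1), w ⟨i.1, by have := i.2; omega⟩ = v i} = 1 ∧
      Nat.card {w : Fin m → ℕ // IsRanking m w ∧
          ∀ i : Fin (m - 1), w ⟨i.1 + 1, by have := i.2; omega⟩ = v i} = 1) := by
  obtain ⟨n, rfl⟩ : ∃ n, m = n + 1 := ⟨m - 1, by omega⟩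
  have hP : ∃ x, P v x := by
    obtain ⟨w, hw, hpre⟩ := hv
    refine ⟨w (Fin.last n), (rank_snoc_iff v _).mp ?_⟩
    have he : Fin.snoc v (w (Fin.last n)) = w := by
      funext p
      induction p using Fin.lastCases with
      | last => simp
      | cast i =>
        rw [Fin.snoc_castSucc]
        exact (hpre i).symm
    rwa [he]
  constructor
  · intro h1
    have hone : occ v 1 := h1
    exact ⟨(card_pre v _ (fun i => rfl)).trans (card_P_two hP hone),
      (card_suf v _ (fun i => rfl)).trans (card_P_two hP hone)⟩
  · intro h1
    have hone : ¬ occ v 1 := h1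
    exact ⟨(card_pre v _ (fun i => rfl)).trans (card_P_one hP hone),
      (card_suf v _ (fun i => rfl)).trans (card_P_one hP hone)⟩
end

section
/- Let [n] be partitioned-like into q < n designated classes of symbols (not necessarily disjoint, not necessarily covering [n]), and call an m-letter word on [n] a password if it contains at least one symbol from each class. If m ≥ 2q, then a universal cycle of all m-letter passwords exists. -/
namespace UC

open scoped Classical

variable {n m q : ℕ}

/-- words of length `m+1` over alphabet `Fin (n+1)` -/
abbrev Word (n m : ℕ) := Fin (m + 1) → Fin (n + 1)

def pw (C : Fin q → Finset (Fin (n + 1))) (w : Word n m) : Prop :=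
  ∀ i, ∃ j, w j ∈ C i

/-- forget the last letter (replace by junk) -/
def F (w : Word n m) : Word n m := Function.update w (Fin.last m) 0

/-- rotate left by one -/
def rot (w : Word n m) : Word n m := fun j => w (j + 1)

def rotInv (w : Word n m) : Word n m := fun j => w (j - 1)

lemma rot_rotInv (w : Word n m) : rot (rotInv w) = w := by
  funext j; simp [rot, rotInv]

lemma rotInv_rot (w : Word n m) : rotInv (rot w) = w := by
  funext j; simp [rot, rotInv]

lemma pw_rot {C : Fin q → Finset (Fin (n + 1))} {w : Word n m} :
    pw C (rot w) ↔ pw C w := by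
  constructor
  · intro h i
    obtain ⟨j, hj⟩ := h i
    exact ⟨j + 1, hj⟩
  · intro h i
    obtain ⟨j, hj⟩ := h i
    exact ⟨j - 1, by simpa [rot, sub_add_cancel] using hj⟩

lemma pw_rotInv {C : Fin q → Finset (Fin (n + 1))} {w : Word n m} :
    pw C (rotInv w) ↔ pw C w := by
  conv_rhs => rw [← rot_rotInv w]
  exact pw_rot.symm

lemma F_eq_iff {u v : Word n m} :
    F u = F v ↔ ∀ j : Fin (m + 1), (j : ℕ) < m → u j = v j := by
  constructor
  · intro h j hj
    have hne : j ≠ Fin.last m := by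
      intro he; rw [he] at hj; simp [Fin.last] at hj
    have := congrFun h j
    simpa [F, Function.update_of_ne hne] using this
  · intro h
    funext j
    by_cases hj : j = Fin.last m
    · subst hj; simp [F]
    · have hlt : (j : ℕ) < m := by
        have := j.isLt
        rcases Nat.lt_or_ge (j : ℕ) m with h' | h'
        · exact h'
        · exact absurd (Fin.ext (by omega : (j : ℕ) = m)) hj
      simp [F, Function.update_of_ne hj, h j hlt]

/-- one admissible step of the universal-cycle transition relation -/
def step (C : Fin q → Finset (Fin (n + 1))) (u u' : Word n m) : Prop :=
  pw C u ∧ pw C u' ∧ F (rot u) = F u'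

def Reaches (C : Fin q → Finset (Fin (n + 1))) : Word n m → Word n m → Prop :=
  Relation.ReflTransGen (step C)

/-- intermediate window while sliding from `w` to `w'` -/
def wnd (w w' : Word n m) (t : ℕ) (ht : t ≤ m + 1) : Word n m := fun j =>
  if h : (j : ℕ) + t < m + 1 then w ⟨(j : ℕ) + t, h⟩
  else w' ⟨(j : ℕ) + t - (m + 1), by have := j.isLt; omega⟩

lemma wnd_zero (w w' : Word n m) : wnd w w' 0 (by omega) = w := by
  funext j
  simp only [wnd]
  rw [dif_pos (by have := j.isLt; omega : (j : ℕ) + 0 < m + 1)]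
  congr 1 <;> exact Fin.ext (by simp)

lemma wnd_last (w w' : Word n m) : wnd w w' (m + 1) le_rfl = w' := by
  funext j
  simp only [wnd]
  rw [dif_neg (by omega : ¬ ((j : ℕ) + (m + 1) < m + 1))]
  congr 1 <;> exact Fin.ext (by simp)

lemma pw_wnd {C : Fin q → Finset (Fin (n + 1))} {w w' : Word n m}
    (hrep : ∀ i, ∃ j, w j ∈ C i ∧ w' j = w j) (t : ℕ) (ht : t ≤ m + 1) :
    pw C (wnd w w' t ht) := by
  intro i
  obtain ⟨j, hji, hjeq⟩ := hrep i
  rcases Nat.lt_or_ge (j : ℕ) t with hlt | hge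
  · refine ⟨⟨(j : ℕ) + (m + 1) - t, by have := j.isLt; omega⟩, ?_⟩
    simp only [wnd]
    rw [dif_neg (by omega)]
    have : w' ⟨(j : ℕ) + (m+1) - t + t - (m+1), by have := j.isLt; omega⟩ = w' j := by
      congr 1; exact Fin.ext (by simp; omega)
    rw [this, hjeq]; exact hji
  · refine ⟨⟨(j : ℕ) - t, by have := j.isLt; omega⟩, ?_⟩
    simp only [wnd]
    rw [dif_pos (by have := j.isLt; omega)]
    have : w ⟨(j : ℕ) - t + t, by have := j.isLt; omega⟩ = w j := by
      congr 1; exact Fin.ext (by simp; omega)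
    rw [this]; exact hji

lemma step_wnd {C : Fin q → Finset (Fin (n + 1))} {w w' : Word n m}
    (hrep : ∀ i, ∃ j, w j ∈ C i ∧ w' j = w j) (t : ℕ) (ht : t < m + 1) :
    step C (wnd w w' t (le_of_lt ht)) (wnd w w' (t + 1) ht) := by
  refine ⟨pw_wnd hrep t (le_of_lt ht), pw_wnd hrep (t + 1) ht, ?_⟩
  rw [F_eq_iff]
  intro j hj
  have hj1 : ((j + 1 : Fin (m + 1)) : ℕ) = (j : ℕ) + 1 := by
    have : ((1 : Fin (m + 1)) : ℕ) = 1 % (m + 1) := rfl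
    rw [Fin.val_add]
    have h1 : ((1 : Fin (m + 1)) : ℕ) = 1 := by
      simp [Fin.val_one']
      omega
    rw [h1]
    exact Nat.mod_eq_of_lt (by omega)
  show wnd w w' t (le_of_lt ht) (j + 1) = wnd w w' (t + 1) ht j
  simp only [wnd, hj1]
  by_cases hc : (j : ℕ) + 1 + t < m + 1
  · rw [dif_pos hc, dif_pos (by omega)]
    congr 1; exact Fin.ext (by simp; omega)
  · rw [dif_neg hc, dif_neg (by omega)]
    congr 1; exact Fin.ext (by simp; omega)

/-- The replacement lemma: if every class has a witness position where `w` and `w'`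
agree, then `w` reaches `w'`. -/
lemma repl {C : Fin q → Finset (Fin (n + 1))} {w w' : Word n m}
    (hrep : ∀ i, ∃ j, w j ∈ C i ∧ w' j = w j) :
    Reaches C w w' := by
  have key : ∀ t (ht : t ≤ m + 1), Reaches C w (wnd w w' t ht) := by
    intro t
    induction t with
    | zero => intro ht; rw [wnd_zero]; exact Relation.ReflTransGen.refl
    | succ k ih =>
      intro ht
      exact Relation.ReflTransGen.tail (ih (by omega)) (step_wnd hrep k (by omega))
  have := key (m + 1) le_rfl
  rwa [wnd_last] at this

section Tok
variable (cc : Fin q → Fin (n + 1)) (y : Fin (n + 1))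

/-- the word with token `cc i` at position `r i` and blank `y` elsewhere -/
noncomputable def tok (r : Fin q → Fin (m + 1)) : Word n m := fun j =>
  if h : ∃ i, r i = j then cc h.choose else y

variable {cc y}

lemma tok_apply_r {r : Fin q → Fin (m + 1)} (hr : Function.Injective r) (i : Fin q) :
    tok cc y r (r i) = cc i := by
  have h : ∃ i', r i' = r i := ⟨i, rfl⟩
  rw [tok, dif_pos h]
  exact congrArg cc (hr h.choose_spec)

lemma tok_apply_not {r : Fin q → Fin (m + 1)} {j : Fin (m + 1)} (hj : ∀ i, r i ≠ j) :
    tok cc y r j = y := by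
  rw [tok, dif_neg]; push_neg; exact hj

lemma pw_tok {C : Fin q → Finset (Fin (n + 1))} (hcc : ∀ i, cc i ∈ C i)
    {r : Fin q → Fin (m + 1)} (hr : Function.Injective r) : pw C (tok cc y r) :=
  fun i => ⟨r i, by rw [tok_apply_r hr]; exact hcc i⟩

/-- move a single token to a free position -/
lemma tok_move {C : Fin q → Finset (Fin (n + 1))} (hcc : ∀ i, cc i ∈ C i)
    {r : Fin q → Fin (m + 1)} (hr : Function.Injective r) {p : Fin (m + 1)}
    (hp : ∀ i, r i ≠ p) (k : Fin q) :
    Reaches C (tok cc y r) (tok cc y (Function.update r k p)) := by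
  set r2 := Function.update r k p with hr2
  have hr2app : ∀ x, r2 x = if x = k then p else r x := fun x => by
    rw [hr2, Function.update_apply]
  have hr2inj : Function.Injective r2 := by
    intro a b hab
    rw [hr2app, hr2app] at hab
    split_ifs at hab with h1 h2 h2
    · rw [h1, h2]
    · exact absurd hab.symm (hp b)
    · exact absurd hab (hp a)
    · exact hr hab
  set w' : Word n m := fun j => if j = p then cc k else tok cc y r j with hw'
  have hw'app : ∀ j, w' j = if j = p then cc k else tok cc y r j := fun j => by
    rw [hw']
  have h1 : Reaches C (tok cc y r) w' := by
    apply repl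
    intro i
    refine ⟨r i, by rw [tok_apply_r hr]; exact hcc i, ?_⟩
    rw [hw'app, if_neg (hp i)]
  have h2 : Reaches C w' (tok cc y r2) := by
    apply repl
    intro i
    have hval : w' (r2 i) = cc i := by
      rcases eq_or_ne i k with rfl | hik
      · rw [hr2app, if_pos rfl, hw'app, if_pos rfl]
      · rw [hr2app, if_neg hik, hw'app, if_neg (hp i), tok_apply_r hr]
    refine ⟨r2 i, by rw [hval]; exact hcc i, ?_⟩
    rw [tok_apply_r hr2inj, hval]
  exact h1.trans h2

/-- there is always a free position -/
lemma exists_free (hm : 2 * q ≤ m + 1) (r : Fin q → Fin (m + 1)) :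
    ∃ p : Fin (m + 1), ∀ i, r i ≠ p := by
  have hcard : ((Finset.univ.image r)ᶜ : Finset (Fin (m + 1))).Nonempty := by
    rw [← Finset.card_pos, Finset.card_compl]
    have h1 : (Finset.univ.image r).card ≤ q := by
      calc (Finset.univ.image r).card ≤ (Finset.univ : Finset (Fin q)).card :=
            Finset.card_image_le
      _ = q := by simp
    have h2 : Fintype.card (Fin (m + 1)) = m + 1 := by simp
    omega
  obtain ⟨p, hp⟩ := hcard
  rw [Finset.mem_compl] at hp
  refine ⟨p, fun i hip => hp ?_⟩
  rw [← hip]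
  exact Finset.mem_image_of_mem r (Finset.mem_univ i)


/-- token configurations are mutually reachable -/
lemma tok_sort {C : Fin q → Finset (Fin (n + 1))} (hcc : ∀ i, cc i ∈ C i)
    (hm : 2 * q ≤ m + 1) {r r' : Fin q → Fin (m + 1)}
    (hr : Function.Injective r) (hr' : Function.Injective r') :
    Reaches C (tok cc y r) (tok cc y r') := by
  suffices H : ∀ d k (r : Fin q → Fin (m + 1)), Function.Injective r →
      q - k ≤ d → (∀ i : Fin q, (i : ℕ) < k → r i = r' i) →
      Reaches C (tok cc y r) (tok cc y r') by
    exact H q 0 r hr (by omega) (by intro i h; omega)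
  intro d
  induction d with
  | zero =>
    intro k r hrinj hkd hagree
    have : r = r' := funext fun i => hagree i (by have := i.isLt; omega)
    rw [this]
    exact Relation.ReflTransGen.refl
  | succ d ih =>
    intro k r hrinj hkd hagree
    by_cases hk : q ≤ k
    · have : r = r' := funext fun i => hagree i (by have := i.isLt; omega)
      rw [this]
      exact Relation.ReflTransGen.refl
    · push_neg at hk
      set kk : Fin q := ⟨k, hk⟩ with hkk
      by_cases heq : r kk = r' kk
      · refine ih (k + 1) r hrinj (by omega) ?_
        intro i hi
        rcases Nat.lt_or_ge (i : ℕ) k with h | h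
        · exact hagree i h
        · have : i = kk := Fin.ext (by have hkv : (kk : ℕ) = k := rfl; omega)
          rw [this]; exact heq
      · by_cases hocc : ∃ j, r j = r' kk
        · -- evict the occupant, then move token kk into place
          obtain ⟨jj, hjj⟩ := hocc
          have hjk : jj ≠ kk := fun h => heq (h ▸ hjj)
          have hjlt : ¬ ((jj : ℕ) < k) := by
            intro h
            have := hagree jj h
            exact hjk (hr' (by rw [← this, hjj]))
          obtain ⟨p, hp⟩ := exists_free hm r
          have step1 := tok_move (y := y) hcc hrinj hp jj
          set r1 := Function.update r jj p with hr1
          have hr1app : ∀ x, r1 x = if x = jj then p else r x := fun x => by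
            rw [hr1, Function.update_apply]
          have hr1inj : Function.Injective r1 := by
            intro a b hab
            rw [hr1app, hr1app] at hab
            split_ifs at hab with h1 h2 h2
            · rw [h1, h2]
            · exact absurd hab.symm (hp b)
            · exact absurd hab (hp a)
            · exact hrinj hab
          have hfree : ∀ x, r1 x ≠ r' kk := by
            intro x hx
            rw [hr1app] at hx
            split_ifs at hx with h1
            · exact hp jj (by rw [← hjj] at hx; exact hx.symm)
            · exact h1 (hrinj (by rw [hx, ← hjj]))
          have step2 := tok_move (y := y) hcc hr1inj hfree kk
          set r2 := Function.update r1 kk (r' kk) with hr2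
          have hr2app : ∀ x, r2 x = if x = kk then r' kk else r1 x := fun x => by
            rw [hr2, Function.update_apply]
          have hr2inj : Function.Injective r2 := by
            intro a b hab
            rw [hr2app, hr2app] at hab
            split_ifs at hab with h1 h2 h2
            · rw [h1, h2]
            · exact absurd hab.symm (hfree b)
            · exact absurd hab (hfree a)
            · exact hr1inj hab
          have hagree2 : ∀ i : Fin q, (i : ℕ) < k + 1 → r2 i = r' i := by
            intro i hi
            rcases Nat.lt_or_ge (i : ℕ) k with h | h
            · have hik : i ≠ kk := fun hh => by rw [hh] at h; have hkv : (kk : ℕ) = k := rfl; omega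
              have hij : i ≠ jj := fun hh => hjlt (hh ▸ h)
              rw [hr2app, if_neg hik, hr1app, if_neg hij]
              exact hagree i h
            · have : i = kk := Fin.ext (by have hkv : (kk : ℕ) = k := rfl; omega)
              rw [this, hr2app, if_pos rfl]
          have hkd2 : q - (k + 1) ≤ d := by omega
          exact (step1.trans step2).trans (ih (k + 1) r2 hr2inj hkd2 hagree2)
        · -- target position is free: move directly
          push_neg at hocc
          have step1 := tok_move (y := y) hcc hrinj hocc kk
          set r2 := Function.update r kk (r' kk) with hr2
          have hr2app : ∀ x, r2 x = if x = kk then r' kk else r x := fun x => by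
            rw [hr2, Function.update_apply]
          have hr2inj : Function.Injective r2 := by
            intro a b hab
            rw [hr2app, hr2app] at hab
            split_ifs at hab with h1 h2 h2
            · rw [h1, h2]
            · exact absurd hab.symm (hocc b)
            · exact absurd hab (hocc a)
            · exact hrinj hab
          have hagree2 : ∀ i : Fin q, (i : ℕ) < k + 1 → r2 i = r' i := by
            intro i hi
            rcases Nat.lt_or_ge (i : ℕ) k with h | h
            · have hik : i ≠ kk := fun hh => by rw [hh] at h; have hkv : (kk : ℕ) = k := rfl; omega
              rw [hr2app, if_neg hik]
              exact hagree i h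
            · have : i = kk := Fin.ext (by have hkv : (kk : ℕ) = k := rfl; omega)
              rw [this, hr2app, if_pos rfl]
          have hkd2 : q - (k + 1) ≤ d := by omega
          exact step1.trans (ih (k + 1) r2 hr2inj hkd2 hagree2)

/-- every password reaches some token configuration -/
lemma reach_tok {C : Fin q → Finset (Fin (n + 1))} (hcc : ∀ i, cc i ∈ C i)
    (hm : 2 * q ≤ m + 1) {w : Word n m} (hw : pw C w) :
    ∃ r : Fin q → Fin (m + 1), Function.Injective r ∧ Reaches C w (tok cc y r) := by
  -- choose witness positions
  have hwit : ∀ i, w ((hw i).choose) ∈ C i := fun i => (hw i).choose_spec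
  set p : Fin q → Fin (m + 1) := fun i => (hw i).choose with hpdef
  -- choose injective r avoiding the witnesses
  have hcard : q ≤ ((Finset.univ.image p)ᶜ : Finset (Fin (m + 1))).card := by
    rw [Finset.card_compl]
    have h1 : (Finset.univ.image p).card ≤ q := by
      calc (Finset.univ.image p).card ≤ (Finset.univ : Finset (Fin q)).card :=
            Finset.card_image_le
      _ = q := by simp
    have h2 : Fintype.card (Fin (m + 1)) = m + 1 := by simp
    omega
  obtain ⟨r, hrinj, hrp⟩ : ∃ r : Fin q → Fin (m + 1), Function.Injective r ∧
      ∀ i i', r i ≠ p i' := by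
    refine ⟨fun i => Finset.orderEmbOfCardLe _ hcard i, ?_, ?_⟩
    · intro a b hab
      exact (Finset.orderEmbOfCardLe _ hcard).injective hab
    · intro i i' hii
      have h2 := Finset.orderEmbOfCardLe_mem _ hcard i
      rw [Finset.mem_compl] at h2
      apply h2
      have hmem : p i' ∈ Finset.image p Finset.univ :=
        Finset.mem_image_of_mem p (Finset.mem_univ i')
      rw [← hii] at hmem
      exact hmem
  refine ⟨r, hrinj, ?_⟩
  -- first plant the tokens at positions r, then erase the rest
  set w1 : Word n m := fun j => if h : ∃ i, r i = j then cc h.choose else w j with hw1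
  have hw1app : ∀ j, w1 j = if h : ∃ i, r i = j then cc h.choose else w j := fun j => by
    rw [hw1]
  have hw1r : ∀ i, w1 (r i) = cc i := by
    intro i
    have h : ∃ i', r i' = r i := ⟨i, rfl⟩
    rw [hw1app, dif_pos h]
    exact congrArg cc (hrinj h.choose_spec)
  have h1 : Reaches C w w1 := by
    apply repl
    intro i
    refine ⟨p i, hwit i, ?_⟩
    rw [hw1app, dif_neg]
    push_neg
    exact fun i' => hrp i' i
  have h2 : Reaches C w1 (tok cc y r) := by
    apply repl
    intro i
    refine ⟨r i, by rw [hw1r]; exact hcc i, ?_⟩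
    rw [tok_apply_r hrinj, hw1r]
  exact h1.trans h2

end Tok
/-- powers of `e * swap U V` agree with powers of `e` along a path avoiding `U,V` -/
lemma pow_swap_eq {α : Type*} [DecidableEq α] (e : Equiv.Perm α) (U V : α) :
    ∀ (t : ℕ) (x z : α), (e ^ t) x = z → (∀ s, s < t → (e ^ s) x ≠ U ∧ (e ^ s) x ≠ V) →
      ((e * Equiv.swap U V) ^ t) x = z := by
  intro t
  induction t with
  | zero => intro x z h _; exact h
  | succ t ih =>
    intro x z h havoid
    have hx : x ≠ U ∧ x ≠ V := by simpa using havoid 0 (by omega)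
    have h1 : (e * Equiv.swap U V) x = e x := by
      rw [Equiv.Perm.mul_apply, Equiv.swap_apply_of_ne_of_ne hx.1 hx.2]
    have h2 : ((e * Equiv.swap U V) ^ (t + 1)) x = ((e * Equiv.swap U V) ^ t) ((e * Equiv.swap U V) x) := by
      rw [pow_succ, Equiv.Perm.mul_apply]
    rw [h2, h1]
    apply ih (e x) z
    · rw [show (e ^ t) (e x) = (e ^ (t+1)) x by rw [pow_succ, Equiv.Perm.mul_apply]]
      exact h
    · intro s hs
      rw [show (e ^ s) (e x) = (e ^ (s+1)) x by rw [pow_succ, Equiv.Perm.mul_apply]]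
      exact havoid (s + 1) (by omega)

lemma sameCycle_of_pow {α : Type*} (e : Equiv.Perm α) {x z : α} {t : ℕ} (h : (e ^ t) x = z) :
    e.SameCycle x z := ⟨(t : ℤ), by rw [zpow_natCast]; exact h⟩

/-- key step: anything in the cycle of the base point stays connected to `V`
after multiplying by the swap -/
lemma swap_mul_key {α : Type*} [Fintype α] [DecidableEq α] (e : Equiv.Perm α) (w0 U V : α)
    (hU : ¬ e.SameCycle w0 U) (hV : e.SameCycle w0 V) :
    ∀ x, e.SameCycle w0 x → (e * Equiv.swap U V).SameCycle x V := by
  intro x hx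
  have hxV : e.SameCycle x V := hx.symm.trans hV
  have hex : ∃ t : ℕ, (e ^ t) x = U ∨ (e ^ t) x = V := by
    obtain ⟨t, _, ht⟩ := hxV.exists_pow_eq'
    exact ⟨t, Or.inr ht⟩
  set t0 := Nat.find hex with ht0
  have hspec := Nat.find_spec hex
  have hmin : ∀ s, s < t0 → ¬((e ^ s) x = U ∨ (e ^ s) x = V) := fun s hs => Nat.find_min hex hs
  have htV : (e ^ t0) x = V := by
    rcases hspec with h | h
    · exfalso
      exact hU (hx.trans (sameCycle_of_pow e h))
    · exact h
  apply sameCycle_of_pow (e * Equiv.swap U V)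
  apply pow_swap_eq e U V t0 x V htV
  intro s hs
  have := hmin s hs
  push_neg at this
  exact this

/-- multiplying by a swap with one endpoint in the cycle of `w0` and one outside
enlarges the cycle of `w0` -/
lemma swap_mul_enlarge {α : Type*} [Fintype α] [DecidableEq α] (e : Equiv.Perm α) (w0 U V : α)
    (hU : ¬ e.SameCycle w0 U) (hV : e.SameCycle w0 V) :
    (∀ x, e.SameCycle w0 x → (e * Equiv.swap U V).SameCycle w0 x) ∧
      (e * Equiv.swap U V).SameCycle w0 U := by
  have key := swap_mul_key e w0 U V hU hV
  have hw0V : (e * Equiv.swap U V).SameCycle w0 V := key w0 (Equiv.Perm.SameCycle.refl _ _)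
  constructor
  · intro x hx
    exact hw0V.trans (key x hx).symm
  · -- U is sent to e V which lies in the old cycle of w0
    have hstep : (e * Equiv.swap U V) U = e V := by
      rw [Equiv.Perm.mul_apply, Equiv.swap_apply_left]
    have h1 : (e * Equiv.swap U V).SameCycle U (e V) :=
      sameCycle_of_pow _ (t := 1) (by rw [pow_one]; exact hstep)
    have h2 : e.SameCycle w0 (e V) := hV.trans ⟨1, by simp⟩
    have h3 : (e * Equiv.swap U V).SameCycle (e V) V := key (e V) h2
    exact (hw0V.trans h3.symm).trans h1.symm

section PermPart
variable (C : Fin q → Finset (Fin (n + 1)))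

abbrev SP (C : Fin q → Finset (Fin (n + 1))) (m : ℕ) := {w : Word n m // pw C w}

noncomputable instance : Fintype (SP C m) := by
  unfold SP; infer_instance

def Good (e : Equiv.Perm (SP C m)) : Prop := ∀ w : SP C m, F (rot w.val) = F ((e w).val)

/-- balance: there exists a shift-compatible permutation of the set of passwords -/
lemma exists_good : ∃ e : Equiv.Perm (SP C m), Good C e := by
  have fib : ∀ v : Word n m,
      { a : SP C m // F (rot a.val) = v } ≃ { b : SP C m // F b.val = v } := by
    intro v
    refine ⟨fun a => ⟨⟨rot a.val.val, pw_rot.mpr a.val.property⟩, a.property⟩,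
           fun b => ⟨⟨rotInv b.val.val, ?_⟩, ?_⟩, ?_, ?_⟩
    · rw [← pw_rot, rot_rotInv]; exact b.val.property
    · show F (rot (rotInv b.val.val)) = v
      rw [rot_rotInv]; exact b.property
    · intro a
      apply Subtype.ext; apply Subtype.ext
      show rotInv (rot a.val.val) = a.val.val
      rw [rotInv_rot]
    · intro b
      apply Subtype.ext; apply Subtype.ext
      show rot (rotInv b.val.val) = b.val.val
      rw [rot_rotInv]
  refine ⟨Equiv.ofFiberEquiv fib, ?_⟩
  intro w
  exact (Equiv.ofFiberEquiv_map fib w).symm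

/-- a boundary crossing along a reachability walk -/
lemma cross {α : Type*} {r : α → α → Prop} {P : α → Prop} :
    ∀ {a b}, Relation.ReflTransGen r a b → ¬ P a → P b →
      ∃ u v, r u v ∧ ¬ P u ∧ P v := by
  intro a b h
  induction h with
  | refl => intro h1 h2; exact absurd h2 h1
  | @tail b c hab hbc ih =>
    intro hna hPc
    by_cases hPb : P b
    · exact ih hna hPb
    · exact ⟨b, c, hbc, hPb, hPc⟩

/-- there is a shift-compatible permutation which is a single cycle,
provided every password reaches the canonical one -/
lemma exists_single_cycle (w0 : SP C m)
    (hreach : ∀ x : SP C m, Reaches C x.val w0.val) :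
    ∃ e : Equiv.Perm (SP C m), Good C e ∧ ∀ x, e.SameCycle w0 x := by
  classical
  set Φ : Finset (Equiv.Perm (SP C m)) := Finset.univ.filter (fun e => Good C e) with hΦ
  have hne : Φ.Nonempty := by
    obtain ⟨e, he⟩ := exists_good C
    exact ⟨e, by simp [hΦ, he]⟩
  obtain ⟨e, heΦ, hemax⟩ := Finset.exists_max_image Φ
    (fun e => (Finset.univ.filter (fun x => e.SameCycle w0 x)).card) hne
  have heGood : Good C e := by simpa [hΦ] using heΦ
  refine ⟨e, heGood, ?_⟩
  by_contra hfull
  push_neg at hfull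
  obtain ⟨x0, hx0⟩ := hfull
  -- walk from x0 to w0 and find the boundary crossing
  have hwalk := hreach x0
  have hcross := cross (P := fun z => ∃ h : pw C z, e.SameCycle w0 ⟨z, h⟩) hwalk
    (by
      intro hP
      obtain ⟨h, hsc⟩ := hP
      exact hx0 (by convert hsc using 2))
    ⟨w0.property, by convert Equiv.Perm.SameCycle.refl e w0 using 2⟩
  obtain ⟨u, u', ⟨hpu, hpu', hF⟩, hnu, hPu'⟩ := hcross
  obtain ⟨hpu'2, hscu'⟩ := hPu'
  set U : SP C m := ⟨u, hpu⟩ with hU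
  set U' : SP C m := ⟨u', hpu'⟩ with hU'
  have hnU : ¬ e.SameCycle w0 U := by
    intro hsc
    exact hnu ⟨hpu, hsc⟩
  have hscU' : e.SameCycle w0 U' := by convert hscu' using 2
  set V : SP C m := e⁻¹ U' with hV
  have heV : e V = U' := by rw [hV]; simp
  have hscV : e.SameCycle w0 V := by
    refine hscU'.trans ⟨-1, ?_⟩
    rw [hV]; simp
  -- the modified permutation
  set e' := e * Equiv.swap U V with he'
  have henl := swap_mul_enlarge e w0 U V hnU hscV
  have he'Good : Good C e' := by
    intro x
    rcases eq_or_ne x U with rfl | hxU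
    · have : e' U = U' := by rw [he', Equiv.Perm.mul_apply, Equiv.swap_apply_left, heV]
      rw [this]
      exact hF
    · rcases eq_or_ne x V with rfl | hxV
      · have : e' V = e U := by rw [he', Equiv.Perm.mul_apply, Equiv.swap_apply_right]
        rw [this]
        have h1 : F (rot V.val) = F (e V).val := heGood V
        have h2 : F (rot U.val) = F (e U).val := heGood U
        rw [heV] at h1
        calc F (rot V.val) = F U'.val := h1
        _ = F (rot U.val) := hF.symm
        _ = F (e U).val := h2
      · have : e' x = e x := by
          rw [he', Equiv.Perm.mul_apply, Equiv.swap_apply_of_ne_of_ne hxU hxV]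
        rw [this]
        exact heGood x
  -- contradiction with maximality
  have hsubset : Finset.univ.filter (fun x => e.SameCycle w0 x) ⊂
      Finset.univ.filter (fun x => e'.SameCycle w0 x) := by
    constructor
    · intro x hx
      rw [Finset.mem_filter] at hx ⊢
      exact ⟨hx.1, henl.1 x hx.2⟩
    · intro hsub
      have := hsub (Finset.mem_filter.mpr ⟨Finset.mem_univ U, henl.2⟩)
      rw [Finset.mem_filter] at this
      exact hnU this.2
  have hlt := Finset.card_lt_card hsubset
  have := hemax e' (by simp [hΦ, he'Good])
  omega

end PermPart
lemma fin_add_one_val {m j : ℕ} (h : j + 1 < m + 1) (h0 : j < m + 1) :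
    (⟨j, h0⟩ : Fin (m + 1)) + 1 = ⟨j + 1, h⟩ := by
  apply Fin.ext
  rw [Fin.val_add]
  have h1 : ((1 : Fin (m + 1)) : ℕ) = 1 := by
    rw [Fin.val_one']
    exact Nat.mod_eq_of_lt (by omega)
  rw [h1]
  have h2 : ((⟨j, h0⟩ : Fin (m + 1)) : ℕ) = j := rfl
  rw [h2]
  exact Nat.mod_eq_of_lt (by omega)

theorem main (hm : 2 * q ≤ m + 1)
    (C : Fin q → Finset (Fin (n + 1))) (hC : ∀ i, (C i).Nonempty) :
    ∃ c : ZMod (Nat.card (SP C m)) → Fin (n + 1),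
      ∀ w : Word n m, pw C w →
        ∃! s : ZMod (Nat.card (SP C m)),
          ∀ j : Fin (m + 1), c (s + ((j : ℕ) : ZMod (Nat.card (SP C m)))) = w j := by
  classical
  set cc : Fin q → Fin (n + 1) := fun i => (hC i).choose with hccdef
  have hcc : ∀ i, cc i ∈ C i := fun i => (hC i).choose_spec
  have hrstarinj : Function.Injective
      (fun i : Fin q => (⟨(i : ℕ), by have := i.isLt; omega⟩ : Fin (m + 1))) := by
    intro a b hab
    simp only [Fin.mk.injEq] at hab
    exact Fin.ext hab
  set w0 : SP C m := ⟨tok cc 0 _, pw_tok hcc hrstarinj⟩ with hw0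
  have hreach : ∀ x : SP C m, Reaches C x.val w0.val := by
    intro x
    obtain ⟨r, hrinj, hx⟩ := reach_tok (y := 0) hcc hm x.property
    exact hx.trans (tok_sort hcc hm hrinj hrstarinj)
  obtain ⟨e, heGood, hfull⟩ := exists_single_cycle C w0 hreach
  -- window lemma
  have KW : ∀ (j : ℕ) (hj : j ≤ m) (x : SP C m),
      ((e ^ j) x).val 0 = x.val ⟨j, by omega⟩ := by
    intro j
    induction j with
    | zero => intro hj x; rw [pow_zero]; rfl
    | succ j ih =>
      intro hj x
      have h1 : (e ^ (j + 1)) x = (e ^ j) (e x) := by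
        rw [pow_succ, Equiv.Perm.mul_apply]
      rw [h1, ih (by omega) (e x)]
      have h2 := heGood x
      rw [F_eq_iff] at h2
      have h3 := h2 ⟨j, by omega⟩ (by exact (by omega : j < m))
      rw [← h3]
      show x.val ((⟨j, by omega⟩ : Fin (m + 1)) + 1) = x.val ⟨j + 1, by omega⟩
      have h4 : (⟨j, by omega⟩ : Fin (m + 1)) + 1 = (⟨j + 1, by omega⟩ : Fin (m + 1)) :=
        fin_add_one_val (by omega) (by omega)
      rw [h4]
  -- period of the cycle
  set N := Nat.card (SP C m) with hNdef
  have hN : N = Fintype.card (SP C m) := Nat.card_eq_fintype_card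
  have hper_ex : ∃ t, 0 < t ∧ (e ^ t) w0 = w0 :=
    ⟨orderOf e, orderOf_pos e, by rw [pow_orderOf_eq_one]; rfl⟩
  set per := Nat.find hper_ex with hperdef
  obtain ⟨hper0, hperw0⟩ := Nat.find_spec hper_ex
  have phi_add : ∀ a, (e ^ (a + per)) w0 = (e ^ a) w0 := by
    intro a
    rw [pow_add, Equiv.Perm.mul_apply, hperw0]
  have phi_mod : ∀ k, (e ^ (k % per)) w0 = (e ^ k) w0 := by
    intro k
    induction k using Nat.strong_induction_on with
    | _ k ih =>
      rcases Nat.lt_or_ge k per with h | h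
      · rw [Nat.mod_eq_of_lt h]
      · have h1 : k % per = (k - per) % per := by
          conv_lhs => rw [show k = (k - per) + per by omega]
          rw [Nat.add_mod_right]
        have h2 : (e ^ (k - per)) w0 = (e ^ k) w0 := by
          conv_rhs => rw [show k = (k - per) + per by omega]
          rw [phi_add]
        rw [h1, ih (k - per) (by omega), h2]
  have inj_le : ∀ a b, a ≤ b → b < per → (e ^ a) w0 = (e ^ b) w0 → a = b := by
    intro a b hab hb hphi
    by_contra hne
    have hd : 0 < b - a := by omega
    have hb' : (e ^ b) w0 = (e ^ a) ((e ^ (b - a)) w0) := by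
      rw [← Equiv.Perm.mul_apply, ← pow_add]
      congr 2
      omega
    have hfix : (e ^ (b - a)) w0 = w0 := by
      apply (e ^ a).injective
      rw [← hb', ← hphi]
    exact Nat.find_min hper_ex (by omega : b - a < per) ⟨hd, hfix⟩
  have surj : ∀ x : SP C m, ∃ k, (e ^ k) w0 = x := by
    intro x
    obtain ⟨i, _, hi⟩ := (hfull x).exists_pow_eq'
    exact ⟨i, hi⟩
  have hNper : N = per := by
    have hinj : Function.Injective (fun k : Fin per => (e ^ (k : ℕ)) w0) := by
      intro a b hab
      rcases le_or_gt (a : ℕ) (b : ℕ) with h | h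
      · exact Fin.ext (inj_le _ _ h b.isLt hab)
      · exact Fin.ext (inj_le _ _ (le_of_lt h) a.isLt hab.symm).symm
    have hsurj : Function.Surjective (fun k : Fin per => (e ^ (k : ℕ)) w0) := by
      intro x
      obtain ⟨k, hk⟩ := surj x
      refine ⟨⟨k % per, Nat.mod_lt _ hper0⟩, ?_⟩
      show (e ^ (k % per)) w0 = x
      rw [phi_mod, hk]
    have h1 := Fintype.card_le_of_injective _ hinj
    have h2 := Fintype.card_le_of_surjective _ hsurj
    rw [Fintype.card_fin] at h1 h2
    omega
  haveI : NeZero N := ⟨by omega⟩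
  have phi_modN : ∀ k, (e ^ (k % N)) w0 = (e ^ k) w0 := by
    intro k
    rw [hNper]
    exact phi_mod k
  have injN : ∀ a b, a < N → b < N → (e ^ a) w0 = (e ^ b) w0 → a = b := by
    intro a b ha hb hab
    rcases le_or_gt a b with h | h
    · exact inj_le a b h (by omega) hab
    · exact (inj_le b a (by omega) (by omega) hab.symm).symm
  refine ⟨fun s => ((e ^ (ZMod.val s)) w0).val 0, ?_⟩
  have window : ∀ (s : ZMod N) (j : Fin (m + 1)),
      ((e ^ (ZMod.val (s + ((j : ℕ) : ZMod N)))) w0).val 0 = ((e ^ ZMod.val s) w0).val j := by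
    intro s j
    have hval : ZMod.val (s + ((j : ℕ) : ZMod N)) = (ZMod.val s + (j : ℕ)) % N := by
      rw [ZMod.val_add, ZMod.val_natCast]
      exact Nat.ModEq.add_left _ (Nat.mod_modEq _ _)
    have hsplit : (e ^ (ZMod.val s + (j : ℕ))) w0 = (e ^ (j : ℕ)) ((e ^ ZMod.val s) w0) := by
      rw [Nat.add_comm, pow_add, Equiv.Perm.mul_apply]
    rw [hval, phi_modN, hsplit, KW (j : ℕ) (by have := j.isLt; omega) _]
  intro w hw
  obtain ⟨k, hk⟩ := surj ⟨w, hw⟩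
  have hvalk : (e ^ ZMod.val ((k : ℕ) : ZMod N)) w0 = (⟨w, hw⟩ : SP C m) := by
    rw [ZMod.val_natCast, phi_modN, hk]
  refine ⟨((k : ℕ) : ZMod N), ?_, ?_⟩
  · intro j
    show ((e ^ (ZMod.val ((k : ZMod N) + ((j : ℕ) : ZMod N)))) w0).val 0 = w j
    rw [window, hvalk]
  · intro s' hs'
    have hval' : (e ^ ZMod.val s') w0 = (⟨w, hw⟩ : SP C m) := by
      apply Subtype.ext
      funext j
      have hj : ((e ^ (ZMod.val (s' + ((j : ℕ) : ZMod N)))) w0).val 0 = w j := hs' j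
      rw [window] at hj
      exact hj
    apply ZMod.val_injective
    exact injN _ _ (ZMod.val_lt _) (ZMod.val_lt _) (hval'.trans hvalk.symm)

end UC

/-- Given `q < n` designated nonempty classes `C i ⊆ [n]` of symbols (not
necessarily disjoint nor covering `[n]`), call an `m`-letter word on `[n]` a
password if it contains at least one symbol from each class.  If `m ≥ 2q`,
then a universal cycle of all `m`-letter passwords exists: a cyclic sequence
whose length is the number of passwords, containing every password exactly
once as a window of `m` cyclically consecutive letters. -/
theorem stmt_18 (n m q : ℕ) (hq : q < n) (hm : 2 * q ≤ m)
    (C : Fin q → Finset (Fin n)) (hC : ∀ i, (C i).Nonempty) :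
    ∃ c : ZMod (Nat.card {w : Fin m → Fin n // ∀ i : Fin q, ∃ j : Fin m, w j ∈ C i}) → Fin n,
      ∀ w : Fin m → Fin n, (∀ i : Fin q, ∃ j : Fin m, w j ∈ C i) →
        ∃! s : ZMod (Nat.card {w : Fin m → Fin n // ∀ i : Fin q, ∃ j : Fin m, w j ∈ C i}),
          ∀ j : Fin m, c (s + (j : ℕ)) = w j := by
  rcases m with _ | M
  · -- `m = 0`, hence `q = 0` and there is exactly one (empty) password
    have hq0 : q = 0 := by omega
    subst hq0
    haveI : Unique {w : Fin 0 → Fin n // ∀ i : Fin 0, ∃ j : Fin 0, w j ∈ C i} :=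
      { default := ⟨fun j => j.elim0, fun i => i.elim0⟩,
        uniq := by intro a; apply Subtype.ext; funext j; exact j.elim0 }
    have h1 : Nat.card {w : Fin 0 → Fin n // ∀ i : Fin 0, ∃ j : Fin 0, w j ∈ C i} = 1 :=
      Nat.card_unique
    haveI : Subsingleton
        (ZMod (Nat.card {w : Fin 0 → Fin n // ∀ i : Fin 0, ∃ j : Fin 0, w j ∈ C i})) := by
      rw [h1]
      infer_instance
    have hn : 0 < n := hq
    refine ⟨fun _ => ⟨0, hn⟩, ?_⟩
    intro w hw
    refine ⟨0, ?_, ?_⟩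
    · intro j; exact j.elim0
    · intro s' _; exact Subsingleton.elim s' 0
  · rcases n with _ | N
    · omega
    · exact UC.main hm C hC
end
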